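/- arXiv:2501.10038 — 3 statements merged into one kernel-verified Lean document; each statement's English description precedes it below -/
import Mathlib

section
/- Suppose p : ℝ × ℝ^d × (0,T] → ℝ≥0 satisfies the Gaussian bound p(m, x; t, x₀) ≤ C_T φ_{d+1}(m - x₀¹, m - x¹, x̃ - x̃₀; 2t) · 1_{m > max(x¹, x₀¹)}, and let f₀ ∈ L¹ ∩ L²(ℝ^d) be a probability density. Define p_V(m,x;t) = ∫ p(m,x;t,x₀) f₀(x₀) dx₀. Then sup_{t ∈ (0,T]} ∫_{ℝ^d} ( ∫_{m ≥ x¹} p_V(m, x; t) dm )² dx ≤ C_T² ‖f₀‖²_{L²} (up to a universal multiplicative constant depending on d). -/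
open MeasureTheory ENNReal Real

/-- The one-dimensional centered Gaussian density with variance `t`. -/
noncomputable def gaussPhi1 (u t : ℝ) : ℝ :=
  (2 * Real.pi * t) ^ (-(1 : ℝ) / 2) * Real.exp (-u ^ 2 / (2 * t))

/-- The centered Gaussian density on `ℝ^e` with covariance `t·I`. -/
noncomputable def gaussPhi (e : ℕ) (z : EuclideanSpace ℝ (Fin e)) (t : ℝ) : ℝ :=
  (2 * Real.pi * t) ^ (-(e : ℝ) / 2) * Real.exp (-‖z‖ ^ 2 / (2 * t))

namespace SupL2Aux

lemma ofReal_integral_le {α : Type*} [MeasurableSpace α] (μ : Measure α) (f : α → ℝ) :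
    ENNReal.ofReal (∫ x, f x ∂μ) ≤ ∫⁻ x, ENNReal.ofReal (f x) ∂μ := by
  by_cases hf : Integrable f μ
  · have h1 : ∫ x, f x ∂μ ≤ ∫ x, max (f x) 0 ∂μ :=
      integral_mono hf hf.pos_part fun x => le_max_left _ _
    have h2 : ENNReal.ofReal (∫ x, max (f x) 0 ∂μ)
        = ∫⁻ x, ENNReal.ofReal (max (f x) 0) ∂μ :=
      ofReal_integral_eq_lintegral_ofReal hf.pos_part
        (Filter.Eventually.of_forall fun x => le_max_right _ _)
    have h3 : ∀ x, ENNReal.ofReal (max (f x) 0) = ENNReal.ofReal (f x) := fun x => by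
      rcases le_total (f x) 0 with h | h
      · simp [max_eq_right h, ENNReal.ofReal_eq_zero.2 h]
      · simp [max_eq_left h]
    calc ENNReal.ofReal (∫ x, f x ∂μ) ≤ ENNReal.ofReal (∫ x, max (f x) 0 ∂μ) :=
          ENNReal.ofReal_le_ofReal h1
      _ = ∫⁻ x, ENNReal.ofReal (max (f x) 0) ∂μ := h2
      _ = ∫⁻ x, ENNReal.ofReal (f x) ∂μ := by simp_rw [h3]
  · rw [integral_undef hf]; simp

lemma gaussPhi1_eq (s u : ℝ) :
    gaussPhi1 u s = (2 * π * s) ^ (-(1:ℝ)/2) * rexp (-(1/(2*s)) * u ^ 2) := by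
  unfold gaussPhi1
  congr 2
  ring

lemma gaussPhi1_nonneg {s : ℝ} (hs : 0 < s) (u : ℝ) : 0 ≤ gaussPhi1 u s := by
  unfold gaussPhi1
  positivity

lemma integrable_gaussPhi1 {s : ℝ} (hs : 0 < s) : Integrable (fun u => gaussPhi1 u s) := by
  simp_rw [gaussPhi1_eq]
  exact (integrable_exp_neg_mul_sq (by positivity)).const_mul _

lemma integral_gaussPhi1 {s : ℝ} (hs : 0 < s) : ∫ u, gaussPhi1 u s = 1 := by
  simp_rw [gaussPhi1_eq]
  rw [integral_const_mul, integral_gaussian]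
  have h2 : π / (1/(2*s)) = 2 * π * s := by field_simp
  rw [h2, Real.sqrt_eq_rpow, ← Real.rpow_add (by positivity : (0:ℝ) < 2*π*s)]
  norm_num

lemma lintegral_gaussPhi1 {s : ℝ} (hs : 0 < s) :
    ∫⁻ u, ENNReal.ofReal (gaussPhi1 u s) = 1 := by
  rw [← ofReal_integral_eq_lintegral_ofReal (integrable_gaussPhi1 hs)
    (Filter.Eventually.of_forall (gaussPhi1_nonneg hs)), integral_gaussPhi1 hs,
    ENNReal.ofReal_one]

lemma gaussPhi_eq (e : ℕ) (s : ℝ) (z : EuclideanSpace ℝ (Fin e)) :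
    gaussPhi e z s = (2 * π * s) ^ (-(e:ℝ)/2) * rexp (-(1/(2*s)) * ‖z‖ ^ 2) := by
  unfold gaussPhi
  congr 2
  ring

lemma gaussPhi_nonneg {e : ℕ} {s : ℝ} (hs : 0 < s) (z : EuclideanSpace ℝ (Fin e)) :
    0 ≤ gaussPhi e z s := by
  unfold gaussPhi
  positivity

lemma integrable_exp_neg_mul_sq_norm {e : ℕ} {b : ℝ} (hb : 0 < b) :
    Integrable (fun z : EuclideanSpace ℝ (Fin e) => rexp (-b * ‖z‖ ^ 2)) := by
  have h := (GaussianFourier.integrable_cexp_neg_mul_sq_norm_add (V := EuclideanSpace ℝ (Fin e))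
      (b := (b:ℂ)) (by simpa using hb) 0 0).norm
  refine (integrable_congr ?_).mp h
  filter_upwards with z
  rw [Complex.norm_exp]
  norm_num
  left
  rw [← Complex.ofReal_pow, Complex.ofReal_re]

lemma integrable_gaussPhi {e : ℕ} {s : ℝ} (hs : 0 < s) :
    Integrable (fun z : EuclideanSpace ℝ (Fin e) => gaussPhi e z s) := by
  simp_rw [gaussPhi_eq]
  exact (integrable_exp_neg_mul_sq_norm (by positivity)).const_mul _

lemma integral_gaussPhi {e : ℕ} {s : ℝ} (hs : 0 < s) :
    ∫ z : EuclideanSpace ℝ (Fin e), gaussPhi e z s = 1 := by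
  simp_rw [gaussPhi_eq]
  rw [integral_const_mul, GaussianFourier.integral_rexp_neg_mul_sq_norm (by positivity : (0:ℝ) < 1/(2*s))]
  have h2 : π / (1/(2*s)) = 2 * π * s := by field_simp
  rw [h2, finrank_euclideanSpace_fin, ← Real.rpow_add (by positivity : (0:ℝ) < 2*π*s),
    neg_div, neg_add_cancel, Real.rpow_zero]

lemma lintegral_gaussPhi {e : ℕ} {s : ℝ} (hs : 0 < s) :
    ∫⁻ z : EuclideanSpace ℝ (Fin e), ENNReal.ofReal (gaussPhi e z s) = 1 := by
  rw [← ofReal_integral_eq_lintegral_ofReal (integrable_gaussPhi hs)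
    (Filter.Eventually.of_forall (gaussPhi_nonneg hs)), integral_gaussPhi hs,
    ENNReal.ofReal_one]

lemma enn_half_sq (a : ℝ≥0∞) : (a ^ (1/2:ℝ)) ^ (2:ℕ) = a := by
  rw [pow_two, ← ENNReal.rpow_add_of_nonneg (1/2) (1/2) (by norm_num) (by norm_num)]
  norm_num

lemma enn_rpow_two (a : ℝ≥0∞) : a ^ (2:ℝ) = a ^ (2:ℕ) := by
  rw [← ENNReal.rpow_natCast]
  norm_num

end SupL2Aux

/-- If the conditional density `p(m, x; t, x₀)` satisfies the Gaussian bound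
`p(m,x;t,x₀) ≤ C_T φ_{d+1}(m - x₀¹, m - x¹, x̃ - x̃₀; 2t) 1_{m > max(x¹, x₀¹)}`
and `f₀ ∈ L¹ ∩ L²` is a probability density, then, with
`p_V(m,x;t) = ∫ p(m,x;t,x₀) f₀(x₀) dx₀`, one has
`sup_{t ∈ (0,T]} ∫ (∫_{m ≥ x¹} p_V(m,x;t) dm)² dx ≤ K · C_T² ‖f₀‖²_{L²}`
for a constant `K` depending only on the dimension.  Here a point of `ℝ^d`
is written `x = (x¹, x̃) ∈ ℝ × ℝ^{d-1}` with `e := d - 1`. -/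
theorem sup_L2_bound_of_gaussian_domination (e : ℕ) :
    ∃ K : ℝ, 0 < K ∧
      ∀ (T C_T : ℝ), 0 < T → 0 < C_T →
      ∀ (p : ℝ → (ℝ × EuclideanSpace ℝ (Fin e)) → ℝ → (ℝ × EuclideanSpace ℝ (Fin e)) → ℝ)
        (f₀ : (ℝ × EuclideanSpace ℝ (Fin e)) → ℝ),
        (∀ m x t x₀, 0 ≤ p m x t x₀) →
        (∀ m x x₀, ∀ t ∈ Set.Ioc (0 : ℝ) T,
          p m x t x₀ ≤ C_T * (gaussPhi1 (m - x₀.1) (2 * t) * gaussPhi1 (m - x.1) (2 * t) *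
            gaussPhi e (x.2 - x₀.2) (2 * t)) * (if x.1 < m ∧ x₀.1 < m then 1 else 0)) →
        (∀ x, 0 ≤ f₀ x) → Integrable f₀ → MemLp f₀ 2 volume → (∫ x, f₀ x = 1) →
        ∀ t ∈ Set.Ioc (0 : ℝ) T,
          (∫ x : ℝ × EuclideanSpace ℝ (Fin e),
              (∫ m in Set.Ici x.1, ∫ x₀, p m x t x₀ * f₀ x₀) ^ 2) ≤
            K * C_T ^ 2 * ∫ x, f₀ x ^ 2 := by
  classical
  refine ⟨1, one_pos, ?_⟩
  intro T C_T hT hC p f₀ hp hpb hf₀ hf₀int hf₀L2 _hf₀mass t ht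
  have ht0 : 0 < t := ht.1
  set s : ℝ := 2 * t with hs_def
  have hs : 0 < s := by positivity
  haveI hXright : (volume : Measure (ℝ × EuclideanSpace ℝ (Fin e))).IsAddRightInvariant := by
    rw [Measure.volume_eq_prod]; infer_instance
  set A : ℝ → ℝ≥0∞ := fun u => ENNReal.ofReal (gaussPhi1 u s) with hA_def
  set B : EuclideanSpace ℝ (Fin e) → ℝ≥0∞ := fun z => ENNReal.ofReal (gaussPhi e z s)
    with hB_def
  set F : (ℝ × EuclideanSpace ℝ (Fin e)) → ℝ≥0∞ := fun x₀ => ENNReal.ofReal (f₀ x₀) with hF_def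
  set c : ℝ≥0∞ := ENNReal.ofReal C_T with hc_def
  have measurable_A : Measurable A := by
    have : Continuous fun u : ℝ => gaussPhi1 u s := by unfold gaussPhi1; fun_prop
    exact this.measurable.ennreal_ofReal
  have measurable_B : Measurable B := by
    have : Continuous fun z : EuclideanSpace ℝ (Fin e) => gaussPhi e z s := by
      unfold gaussPhi; fun_prop
    exact this.measurable.ennreal_ofReal
  have hF : AEMeasurable F volume :=
    ENNReal.measurable_ofReal.comp_aemeasurable hf₀int.aestronglyMeasurable.aemeasurable
  have hA1 : ∫⁻ u, A u = 1 := SupL2Aux.lintegral_gaussPhi1 hs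
  have hB1 : ∫⁻ z, B z = 1 := SupL2Aux.lintegral_gaussPhi hs
  have hAsymm : ∀ u, A (-u) = A u := fun u => by simp [hA_def, gaussPhi1, neg_sq]
  have hBsymm : ∀ z, B (-z) = B z := fun z => by simp [hB_def, gaussPhi, norm_neg]
  -- the kernel on the first coordinate
  set k : ℝ → ℝ≥0∞ := fun v => ∫⁻ m, A (m - v) * A m with hk_def
  have measurable_k : Measurable k := by
    apply Measurable.lintegral_prod_right' (f := fun q : ℝ × ℝ => A (q.2 - q.1) * A q.2)
    exact (measurable_A.comp (measurable_snd.sub measurable_fst)).mul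
      (measurable_A.comp measurable_snd)
  have hk1 : ∫⁻ v, k v = 1 := by
    have hswap : ∫⁻ v, ∫⁻ m, A (m - v) * A m = ∫⁻ m, ∫⁻ v, A (m - v) * A m := by
      apply lintegral_lintegral_swap
      exact ((measurable_A.comp (measurable_snd.sub measurable_fst)).mul
        (measurable_A.comp measurable_snd)).aemeasurable
    simp only [hk_def]; rw [hswap]
    have hinner : ∀ m : ℝ, ∫⁻ v, A (m - v) * A m = A m := by
      intro m
      rw [lintegral_mul_const' _ _ ENNReal.ofReal_ne_top]
      have h1 : ∫⁻ v, A (m - v) = ∫⁻ v, A (v - m) :=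
        lintegral_congr fun v => by rw [← hAsymm (v - m), neg_sub]
      rw [h1, (measurePreserving_sub_right volume m).lintegral_comp measurable_A, hA1, one_mul]
    simp_rw [hinner]
    exact hA1
  have hksymm : ∀ v, k (-v) = k v := by
    intro v
    have hmp := (measurePreserving_add_right volume v).lintegral_comp
      (f := fun m => A m * A (m - v))
      (measurable_A.mul (measurable_A.comp (measurable_id.sub measurable_const)))
    calc k (-v) = ∫⁻ m, A (m + v) * A (m + v - v) := by
          refine lintegral_congr fun m => ?_
          rw [sub_neg_eq_add, add_sub_cancel_right]
      _ = ∫⁻ m, A m * A (m - v) := hmp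
      _ = k v := lintegral_congr fun m => mul_comm _ _
  -- the full kernel
  set G : (ℝ × EuclideanSpace ℝ (Fin e)) → ℝ≥0∞ := fun z => k z.1 * B z.2 with hG_def
  have measurable_G : Measurable G :=
    (measurable_k.comp measurable_fst).mul (measurable_B.comp measurable_snd)
  have hGsymm : ∀ z : ℝ × EuclideanSpace ℝ (Fin e), G (-z) = G z := fun z => by
    simp only [hG_def, Prod.fst_neg, Prod.snd_neg, hksymm, hBsymm]
  have hIG : ∫⁻ z : ℝ × EuclideanSpace ℝ (Fin e), G z = 1 := by
    rw [hG_def, Measure.volume_eq_prod,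
      lintegral_prod_mul measurable_k.aemeasurable measurable_B.aemeasurable, hk1, hB1, one_mul]
  have hGtrans : ∀ x : ℝ × EuclideanSpace ℝ (Fin e), ∫⁻ y, G (y - x) = 1 := fun x =>
    ((measurePreserving_sub_right volume x).lintegral_comp measurable_G).trans hIG
  have hGtrans' : ∀ x₀ : ℝ × EuclideanSpace ℝ (Fin e), ∫⁻ x, G (x₀ - x) = 1 := by
    intro x₀
    have h1 : ∀ x : ℝ × EuclideanSpace ℝ (Fin e), G (x₀ - x) = G (x - x₀) := fun x => by
      rw [← hGsymm (x - x₀), neg_sub]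
    rw [lintegral_congr h1]
    exact hGtrans x₀
  -- the pointwise domination of the inner integral
  have hpoint : ∀ x : ℝ × EuclideanSpace ℝ (Fin e), ENNReal.ofReal (∫ m in Set.Ici x.1, ∫ x₀, p m x t x₀ * f₀ x₀)
      ≤ c * ∫⁻ x₀, G (x₀ - x) * F x₀ := by
    intro x
    have step3 : ∀ (m : ℝ) (x₀ : ℝ × EuclideanSpace ℝ (Fin e)), ENNReal.ofReal (p m x t x₀ * f₀ x₀)
        ≤ (c * (A (m - x₀.1) * A (m - x.1) * B (x.2 - x₀.2))) * F x₀ := by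
      intro m x₀
      rw [ENNReal.ofReal_mul (hp m x t x₀)]
      refine mul_le_mul' ?_ le_rfl
      refine le_trans (ENNReal.ofReal_le_ofReal (hpb m x x₀ t ht)) ?_
      have hg1 : 0 ≤ gaussPhi1 (m - x₀.1) s := SupL2Aux.gaussPhi1_nonneg hs _
      have hg2 : 0 ≤ gaussPhi1 (m - x.1) s := SupL2Aux.gaussPhi1_nonneg hs _
      have hg3 : 0 ≤ gaussPhi e (x.2 - x₀.2) s := SupL2Aux.gaussPhi_nonneg hs _
      have hind : (if x.1 < m ∧ x₀.1 < m then (1:ℝ) else 0) ≤ 1 := by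
        split <;> norm_num
      have hCp : 0 ≤ C_T * (gaussPhi1 (m - x₀.1) s * gaussPhi1 (m - x.1) s *
          gaussPhi e (x.2 - x₀.2) s) := by positivity
      calc ENNReal.ofReal (C_T * (gaussPhi1 (m - x₀.1) s * gaussPhi1 (m - x.1) s *
              gaussPhi e (x.2 - x₀.2) s) * (if x.1 < m ∧ x₀.1 < m then (1:ℝ) else 0))
          ≤ ENNReal.ofReal (C_T * (gaussPhi1 (m - x₀.1) s * gaussPhi1 (m - x.1) s *
              gaussPhi e (x.2 - x₀.2) s)) :=
            ENNReal.ofReal_le_ofReal (mul_le_of_le_one_right hCp hind)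
        _ = c * (A (m - x₀.1) * A (m - x.1) * B (x.2 - x₀.2)) := by
            rw [ENNReal.ofReal_mul hC.le, ENNReal.ofReal_mul (mul_nonneg hg1 hg2),
              ENNReal.ofReal_mul hg1]
    calc ENNReal.ofReal (∫ m in Set.Ici x.1, ∫ x₀, p m x t x₀ * f₀ x₀)
        ≤ ∫⁻ m in Set.Ici x.1, ENNReal.ofReal (∫ x₀, p m x t x₀ * f₀ x₀) :=
          SupL2Aux.ofReal_integral_le _ _
      _ ≤ ∫⁻ m in Set.Ici x.1, ∫⁻ x₀, ENNReal.ofReal (p m x t x₀ * f₀ x₀) :=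
          lintegral_mono fun m => SupL2Aux.ofReal_integral_le _ _
      _ ≤ ∫⁻ m in Set.Ici x.1, ∫⁻ x₀,
            (c * (A (m - x₀.1) * A (m - x.1) * B (x.2 - x₀.2))) * F x₀ :=
          lintegral_mono fun m => lintegral_mono fun x₀ => step3 m x₀
      _ ≤ ∫⁻ m, ∫⁻ x₀, (c * (A (m - x₀.1) * A (m - x.1) * B (x.2 - x₀.2))) * F x₀ :=
          setLIntegral_le_lintegral _ _
      _ = c * ∫⁻ m, ∫⁻ x₀, (A (m - x₀.1) * A (m - x.1) * B (x.2 - x₀.2)) * F x₀ := by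
          rw [← lintegral_const_mul' c _ ENNReal.ofReal_ne_top]
          refine lintegral_congr fun m => ?_
          rw [← lintegral_const_mul' c _ ENNReal.ofReal_ne_top]
          exact lintegral_congr fun x₀ => by ring
      _ = c * ∫⁻ x₀, ∫⁻ m, (A (m - x₀.1) * A (m - x.1) * B (x.2 - x₀.2)) * F x₀ := by
          congr 1
          apply lintegral_lintegral_swap
          refine AEMeasurable.mul ?_ (hF.comp_quasiMeasurePreserving
            Measure.quasiMeasurePreserving_snd)
          apply Measurable.aemeasurable
          refine Measurable.mul (f := fun a : ℝ × (ℝ × EuclideanSpace ℝ (Fin e)) => A (a.1 - a.2.1) * A (a.1 - x.1))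
            (g := fun a => B (x.2 - a.2.2))
            (Measurable.mul (f := fun a : ℝ × (ℝ × EuclideanSpace ℝ (Fin e)) => A (a.1 - a.2.1))
            (g := fun a => A (a.1 - x.1)) ?_ ?_) ?_
          · exact measurable_A.comp (measurable_fst.sub (measurable_snd.fst))
          · exact measurable_A.comp (measurable_fst.sub measurable_const)
          · exact measurable_B.comp (measurable_const.sub (measurable_snd.snd))
      _ = c * ∫⁻ x₀, G (x₀ - x) * F x₀ := by
          congr 1
          refine lintegral_congr fun x₀ => ?_
          have harr : ∀ m : ℝ, (A (m - x₀.1) * A (m - x.1) * B (x.2 - x₀.2)) * F x₀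
              = (A (m - x₀.1) * A (m - x.1)) * (B (x.2 - x₀.2) * F x₀) := fun m => by ring
          rw [lintegral_congr harr,
            lintegral_mul_const' _ _ (ENNReal.mul_ne_top ENNReal.ofReal_ne_top
              ENNReal.ofReal_ne_top)]
          have hmA : ∫⁻ m, A (m - x₀.1) * A (m - x.1) = k (x₀.1 - x.1) := by
            have hmp := (measurePreserving_add_right volume x.1).lintegral_comp
              (f := fun m => A (m - x₀.1) * A (m - x.1))
              ((measurable_A.comp (measurable_id.sub measurable_const)).mul
                (measurable_A.comp (measurable_id.sub measurable_const)))
            rw [← hmp]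
            refine lintegral_congr fun m => ?_
            show A (m + x.1 - x₀.1) * A (m + x.1 - x.1) = A (m - (x₀.1 - x.1)) * A m
            congr 1
            · congr 1; ring
            · congr 1; ring
          rw [hmA]
          have hBs : B (x.2 - x₀.2) = B (x₀.2 - x.2) := by
            rw [← hBsymm (x₀.2 - x.2), neg_sub]
          show k (x₀.1 - x.1) * (B (x.2 - x₀.2) * F x₀) = G (x₀ - x) * F x₀
          rw [hBs]
          simp only [hG_def, Prod.fst_sub, Prod.snd_sub]
          ring
  -- Cauchy-Schwarz step
  have hCS : ∀ x : ℝ × EuclideanSpace ℝ (Fin e), (∫⁻ x₀, G (x₀ - x) * F x₀) ^ 2 ≤ ∫⁻ x₀, G (x₀ - x) * F x₀ ^ 2 := by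
    intro x
    have hGm : Measurable fun x₀ : ℝ × EuclideanSpace ℝ (Fin e) => G (x₀ - x) :=
      measurable_G.comp (measurable_id.sub measurable_const)
    have hmeas1 : AEMeasurable (fun x₀ : ℝ × EuclideanSpace ℝ (Fin e) => (G (x₀ - x)) ^ (1/2:ℝ)) volume :=
      (hGm.pow_const _).aemeasurable
    have hmeas2 : AEMeasurable (fun x₀ : ℝ × EuclideanSpace ℝ (Fin e) => (G (x₀ - x)) ^ (1/2:ℝ) * F x₀) volume :=
      hmeas1.mul hF
    have hpq : Real.HolderConjugate 2 2 := Real.HolderConjugate.two_two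
    have h := ENNReal.lintegral_mul_le_Lp_mul_Lq volume hpq hmeas1 hmeas2
    have heq : ∀ x₀ : ℝ × EuclideanSpace ℝ (Fin e), (G (x₀ - x)) ^ (1/2:ℝ) * ((G (x₀ - x)) ^ (1/2:ℝ) * F x₀)
        = G (x₀ - x) * F x₀ := fun x₀ => by
      rw [← mul_assoc, ← pow_two, SupL2Aux.enn_half_sq]
    have h1 : ∫⁻ x₀, G (x₀ - x) * F x₀
        ≤ (∫⁻ x₀, G (x₀ - x)) ^ (1/2:ℝ) * (∫⁻ x₀, G (x₀ - x) * F x₀ ^ 2) ^ (1/2:ℝ) := by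
      calc ∫⁻ x₀, G (x₀ - x) * F x₀
          = ∫⁻ x₀, (G (x₀ - x)) ^ (1/2:ℝ) * ((G (x₀ - x)) ^ (1/2:ℝ) * F x₀) :=
            (lintegral_congr heq).symm
        _ ≤ (∫⁻ x₀, ((G (x₀ - x)) ^ (1/2:ℝ)) ^ (2:ℝ)) ^ (1/2:ℝ) *
            (∫⁻ x₀, ((G (x₀ - x)) ^ (1/2:ℝ) * F x₀) ^ (2:ℝ)) ^ (1/2:ℝ) := h
        _ = (∫⁻ x₀, G (x₀ - x)) ^ (1/2:ℝ) *
            (∫⁻ x₀, G (x₀ - x) * F x₀ ^ 2) ^ (1/2:ℝ) := by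
            congr 1
            · congr 1
              exact lintegral_congr fun x₀ => by
                rw [SupL2Aux.enn_rpow_two, SupL2Aux.enn_half_sq]
            · congr 1
              exact lintegral_congr fun x₀ => by
                rw [SupL2Aux.enn_rpow_two, mul_pow, SupL2Aux.enn_half_sq]
    rw [hGtrans x, ENNReal.one_rpow, one_mul] at h1
    calc (∫⁻ x₀, G (x₀ - x) * F x₀) ^ 2
        ≤ ((∫⁻ x₀, G (x₀ - x) * F x₀ ^ 2) ^ (1/2:ℝ)) ^ 2 := pow_le_pow_left' h1 2
      _ = ∫⁻ x₀, G (x₀ - x) * F x₀ ^ 2 := SupL2Aux.enn_half_sq _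
  -- integrating the Cauchy-Schwarz bound
  have hQint : ∫⁻ x : ℝ × EuclideanSpace ℝ (Fin e), (∫⁻ x₀, G (x₀ - x) * F x₀ ^ 2) = ∫⁻ x₀, F x₀ ^ 2 := by
    have hswap : ∫⁻ x : ℝ × EuclideanSpace ℝ (Fin e), ∫⁻ x₀, G (x₀ - x) * F x₀ ^ 2
        = ∫⁻ x₀ : ℝ × EuclideanSpace ℝ (Fin e), ∫⁻ x, G (x₀ - x) * F x₀ ^ 2 := by
      apply lintegral_lintegral_swap
      refine AEMeasurable.mul ?_ ?_
      · exact (measurable_G.comp (measurable_snd.sub measurable_fst)).aemeasurable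
      · exact ((hF.comp_quasiMeasurePreserving Measure.quasiMeasurePreserving_snd).pow
          aemeasurable_const)
    rw [hswap]
    refine lintegral_congr fun x₀ => ?_
    rw [lintegral_mul_const' _ _ (by
      rw [hF_def]
      exact ENNReal.pow_ne_top ENNReal.ofReal_ne_top), hGtrans' x₀, one_mul]
  -- converting `∫⁻ F²` back
  have hFsq : ∫⁻ x : ℝ × EuclideanSpace ℝ (Fin e), F x ^ 2 = ENNReal.ofReal (∫ x, f₀ x ^ 2) := by
    rw [ofReal_integral_eq_lintegral_ofReal hf₀L2.integrable_sq
      (Filter.Eventually.of_forall fun x => sq_nonneg _)]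
    exact lintegral_congr fun x => (ENNReal.ofReal_pow (hf₀ x) 2).symm
  -- conclusion
  have hRHS : (0:ℝ) ≤ C_T ^ 2 * ∫ x, f₀ x ^ 2 := by
    have : (0:ℝ) ≤ ∫ x : ℝ × EuclideanSpace ℝ (Fin e), f₀ x ^ 2 := integral_nonneg fun x => sq_nonneg _
    positivity
  rw [one_mul]
  refine (ENNReal.ofReal_le_ofReal_iff hRHS).mp ?_
  have hgnn : ∀ x : ℝ × EuclideanSpace ℝ (Fin e), 0 ≤ ∫ m in Set.Ici x.1, ∫ x₀, p m x t x₀ * f₀ x₀ := fun x =>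
    integral_nonneg fun m => integral_nonneg fun x₀ => mul_nonneg (hp m x t x₀) (hf₀ x₀)
  calc ENNReal.ofReal (∫ x : ℝ × EuclideanSpace ℝ (Fin e), (∫ m in Set.Ici x.1, ∫ x₀, p m x t x₀ * f₀ x₀) ^ 2)
      ≤ ∫⁻ x : ℝ × EuclideanSpace ℝ (Fin e), ENNReal.ofReal ((∫ m in Set.Ici x.1, ∫ x₀, p m x t x₀ * f₀ x₀) ^ 2) :=
        SupL2Aux.ofReal_integral_le _ _
    _ = ∫⁻ x : ℝ × EuclideanSpace ℝ (Fin e), (ENNReal.ofReal (∫ m in Set.Ici x.1, ∫ x₀, p m x t x₀ * f₀ x₀)) ^ 2 :=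
        lintegral_congr fun x => ENNReal.ofReal_pow (hgnn x) 2
    _ ≤ ∫⁻ x : ℝ × EuclideanSpace ℝ (Fin e), (c * ∫⁻ x₀, G (x₀ - x) * F x₀) ^ 2 :=
        lintegral_mono fun x => pow_le_pow_left' (hpoint x) 2
    _ = c ^ 2 * ∫⁻ x : ℝ × EuclideanSpace ℝ (Fin e), (∫⁻ x₀, G (x₀ - x) * F x₀) ^ 2 := by
        rw [← lintegral_const_mul' _ _ (ENNReal.pow_ne_top ENNReal.ofReal_ne_top)]
        exact lintegral_congr fun x => by rw [mul_pow]
    _ ≤ c ^ 2 * ∫⁻ x : ℝ × EuclideanSpace ℝ (Fin e), (∫⁻ x₀, G (x₀ - x) * F x₀ ^ 2) :=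
        mul_le_mul' le_rfl (lintegral_mono fun x => hCS x)
    _ = c ^ 2 * ∫⁻ x₀ : ℝ × EuclideanSpace ℝ (Fin e), F x₀ ^ 2 := by rw [hQint]
    _ = ENNReal.ofReal (C_T ^ 2 * ∫ x, f₀ x ^ 2) := by
        rw [hFsq, hc_def, ← ENNReal.ofReal_pow hC.le,
          ← ENNReal.ofReal_mul (by positivity)]
end

section
/- Let B ∈ C¹_b(ℝ^d, ℝ^d) and let Y^x solve dY^x_t = -B(Y^x_t) dt + dW_t, Y^x_0 = x, with W a standard d-dimensional Brownian motion. Define Q_t f(x) := E[ f(Y^x_t) exp( -∫_0^t div B(Y^x_u) du ) ] for f ∈ L²(ℝ^d). Then there is a constant C depending only on ‖B‖_∞, ‖div B‖_∞, T such that ‖Q_t f‖_{L²(ℝ^d)} ≤ C ‖f‖_{L²(ℝ^d)} for all 0 ≤ t ≤ T; i.e. each Q_t is a bounded operator on L²(ℝ^d). -/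
open MeasureTheory ProbabilityTheory
open scoped ENNReal NNReal


/-- Integral-form backward Gronwall inequality: if `g s = c - ∫_0^s ψ` on `[0,t]` and
`‖ψ s‖ ≤ L ‖g s‖`, then `‖c‖ ≤ exp (L t) ‖g t‖`. -/
lemma gronwall_lower {d : ℕ} {L t : ℝ} (hL : 0 ≤ L) (ht : 0 ≤ t)
    (c : Fin d → ℝ) (g ψ : ℝ → (Fin d → ℝ))
    (hψ : IntegrableOn ψ (Set.Ioc 0 t))
    (hg : ∀ s ∈ Set.Icc (0:ℝ) t, g s = c - ∫ r in Set.Ioc (0:ℝ) s, ψ r)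
    (hbd : ∀ s ∈ Set.Ioc (0:ℝ) t, ‖ψ s‖ ≤ L * ‖g s‖) :
    ‖c‖ ≤ Real.exp (L * t) * ‖g t‖ := by
  set G : ℝ → (Fin d → ℝ) := fun s => c - ∫ r in Set.Ioc (0:ℝ) s, ψ r with hGdef
  have hG0 : G 0 = c := by simp [hGdef]
  have hψIcc : IntegrableOn ψ (Set.Icc 0 t) := by
    rwa [integrableOn_Icc_iff_integrableOn_Ioc]
  have hGcont : ContinuousOn G (Set.Icc 0 t) :=
    continuousOn_const.sub (intervalIntegral.continuousOn_primitive hψIcc)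
  set θ : ℝ → ℝ := fun s => max 0 (min s t) with hθdef
  have hθcont : Continuous θ := continuous_const.max (continuous_id.min continuous_const)
  have hθmem : ∀ s, θ s ∈ Set.Icc (0:ℝ) t := fun s =>
    ⟨le_max_left _ _, max_le ht (min_le_right s t)⟩
  have hθeq : ∀ s ∈ Set.Icc (0:ℝ) t, θ s = s := by
    intro s hs
    simp only [hθdef]
    rw [min_eq_left hs.2, max_eq_right hs.1]
  set φ : ℝ → ℝ := fun s => ‖G (θ s)‖ with hφdef
  have hφcont : Continuous φ := hGcont.norm.comp_continuous hθcont hθmem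
  have hφnonneg : ∀ s, 0 ≤ φ s := fun s => norm_nonneg _
  have hφeq : ∀ s ∈ Set.Icc (0:ℝ) t, φ s = ‖G s‖ := by
    intro s hs; simp only [hφdef]; rw [hθeq s hs]
  set P : ℝ → ℝ := fun y => ∫ u in (0:ℝ)..y, L * φ u with hPdef
  have hPder : ∀ y, HasDerivAt P (L * φ y) y := by
    intro y
    exact (intervalIntegral.integral_hasStrictDerivAt_right
      ((continuous_const.mul hφcont).intervalIntegrable _ _)
      ((continuous_const.mul hφcont).stronglyMeasurableAtFilter _ _)
      (continuous_const.mul hφcont).continuousAt).hasDerivAt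
  have hPsub : ∀ a b : ℝ, P b - P a = ∫ u in a..b, L * φ u := fun a b =>
    intervalIntegral.integral_interval_sub_left
      ((continuous_const.mul hφcont).intervalIntegrable _ _)
      ((continuous_const.mul hφcont).intervalIntegrable _ _)
  have hPmono : ∀ a b : ℝ, a ≤ b → P a ≤ P b := by
    intro a b hab
    have h1 := hPsub a b
    have h2 : (0:ℝ) ≤ ∫ u in a..b, L * φ u :=
      intervalIntegral.integral_nonneg hab (fun u _ => mul_nonneg hL (hφnonneg u))
    linarith
  have claimA : ∀ s ∈ Set.Icc (0:ℝ) t, ‖G s‖ ≤ ‖G t‖ + (P t - P s) := by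
    intro s hs
    obtain ⟨hs0, hst⟩ := hs
    have hsplit : (∫ r in Set.Ioc (0:ℝ) t, ψ r)
        = (∫ r in Set.Ioc (0:ℝ) s, ψ r) + ∫ r in Set.Ioc s t, ψ r := by
      rw [← MeasureTheory.setIntegral_union (Set.Ioc_disjoint_Ioc_of_le le_rfl) measurableSet_Ioc
        (hψ.mono_set (Set.Ioc_subset_Ioc_right hst)) (hψ.mono_set (Set.Ioc_subset_Ioc_left hs0)),
        Set.Ioc_union_Ioc_eq_Ioc hs0 hst]
    have hdiff : G s - G t = ∫ r in Set.Ioc s t, ψ r := by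
      simp only [hGdef]
      rw [hsplit]; abel
    have h1 : ‖G s - G t‖ ≤ ∫ r in Set.Ioc s t, L * φ r := by
      rw [hdiff]
      refine (norm_integral_le_integral_norm _).trans ?_
      refine MeasureTheory.setIntegral_mono_on
        ((hψ.mono_set (Set.Ioc_subset_Ioc_left hs0)).norm)
        ((continuous_const.mul hφcont).integrableOn_Ioc) measurableSet_Ioc ?_
      intro r hr
      have hrI : r ∈ Set.Ioc (0:ℝ) t := ⟨lt_of_le_of_lt hs0 hr.1, hr.2⟩
      have hrIcc : r ∈ Set.Icc (0:ℝ) t := ⟨le_of_lt hrI.1, hrI.2⟩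
      have hb := hbd r hrI
      rw [hg r hrIcc] at hb
      rw [hφeq r hrIcc]
      exact hb
    have h2 : (∫ r in Set.Ioc s t, L * φ r) = P t - P s := by
      rw [hPsub s t, intervalIntegral.integral_of_le hst]
    have h3 : ‖G s‖ - ‖G t‖ ≤ ‖G s - G t‖ := norm_sub_norm_le _ _
    linarith
  set R : ℝ → ℝ := fun v => P t - P (t - v) with hRdef
  have hRder : ∀ v, HasDerivAt R (L * φ (t - v)) v := by
    intro v
    have h1 : HasDerivAt (fun v : ℝ => t - v) (-1) v := by
      simpa using (hasDerivAt_id v).const_sub t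
    have h2 : HasDerivAt (fun v : ℝ => P (t - v)) (L * φ (t - v) * (-1)) v :=
      (hPder (t - v)).comp v h1
    have h3 := (hasDerivAt_const v (P t)).sub h2
    have h4 : (L * φ (t - v)) = 0 - L * φ (t - v) * (-1) := by ring
    rw [h4]; exact h3
  have hRcont : ContinuousOn R (Set.Icc 0 t) := fun v _ =>
    ((hRder v).continuousAt).continuousWithinAt
  have hR0 : R 0 = 0 := by simp [hRdef]
  have hRnonneg : ∀ v, 0 ≤ v → 0 ≤ R v := fun v hv =>
    sub_nonneg.2 (hPmono _ _ (by linarith))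
  have bound : ∀ v ∈ Set.Ico (0:ℝ) t, ‖L * φ (t - v)‖ ≤ L * ‖R v‖ + L * ‖G t‖ := by
    intro v hv
    have htv : t - v ∈ Set.Icc (0:ℝ) t := ⟨by linarith [hv.2], by linarith [hv.1]⟩
    have hA := claimA (t - v) htv
    have hφtv : φ (t - v) = ‖G (t - v)‖ := hφeq _ htv
    have h0R : 0 ≤ R v := hRnonneg v hv.1
    rw [Real.norm_eq_abs, abs_of_nonneg (mul_nonneg hL (hφnonneg _)), Real.norm_eq_abs,
      abs_of_nonneg h0R]
    have hRv : R v = P t - P (t - v) := rfl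
    nlinarith [hφnonneg (t - v), norm_nonneg (G t)]
  have key := norm_le_gronwallBound_of_norm_deriv_right_le (δ := 0) (K := L)
      (ε := L * ‖G t‖) hRcont
      (fun v _ => (hRder v).hasDerivWithinAt) (by simp [hR0]) bound t ⟨ht, le_refl t⟩
  have hRt : ‖R t‖ = R t := abs_of_nonneg (hRnonneg t ht)
  have hc : ‖c‖ ≤ ‖G t‖ + R t := by
    have hA := claimA 0 ⟨le_refl 0, ht⟩
    rw [hG0] at hA
    have : R t = P t - P 0 := by simp [hRdef]
    linarith
  have hgt : g t = G t := hg t ⟨ht, le_refl t⟩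
  rw [hgt]
  rw [hRt, sub_zero] at key
  rcases eq_or_ne L 0 with hL0 | hL0
  · subst hL0
    rw [gronwallBound_K0] at key
    simp only [zero_mul, zero_add] at key
    simp only [zero_mul, Real.exp_zero, one_mul]
    linarith
  · rw [gronwallBound_of_K_ne_0 hL0] at key
    simp only [zero_mul, zero_add] at key
    have hexp : 0 ≤ Real.exp (L * t) - 1 := by
      have : (1:ℝ) ≤ Real.exp (L * t) := Real.one_le_exp (mul_nonneg hL ht)
      linarith
    have hdiv : L * ‖G t‖ / L = ‖G t‖ := by field_simp
    rw [hdiv] at key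
    nlinarith [norm_nonneg (G t)]


/-- If `F` is expansive on `S` and a translation off `S`, then the preimage of any set `A`
under `F` has Lebesgue measure at most `(κ^d + 1) ⬝ volume A`. -/
lemma preimage_measure_bound {d : ℕ} {κ : ℝ≥0}
    (F : (Fin d → ℝ) → (Fin d → ℝ)) (w : Fin d → ℝ) (S : Set (Fin d → ℝ))
    (hexp : ∀ x ∈ S, ∀ x' ∈ S, ‖x - x'‖ ≤ (κ:ℝ) * ‖F x - F x'‖)
    (htrans : ∀ x ∉ S, F x = x + w) (A : Set (Fin d → ℝ)) :
    volume (F ⁻¹' A) ≤ ((κ:ℝ≥0∞) ^ (d:ℝ) + 1) * volume A := by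
  classical
  have hμH : (μH[(d:ℝ)] : Measure (Fin d → ℝ)) = volume := by
    have h := MeasureTheory.hausdorffMeasure_pi_real (ι := Fin d)
    rw [Fintype.card_fin] at h
    exact_mod_cast h
  set G : (Fin d → ℝ) → (Fin d → ℝ) := fun y =>
    if h : ∃ x, x ∈ S ∧ F x = y then h.choose else 0 with hGdef
  have hGF : ∀ x ∈ S, G (F x) = x := by
    intro x hx
    have h : ∃ x', x' ∈ S ∧ F x' = F x := ⟨x, hx, rfl⟩
    have hspec := h.choose_spec
    have hval : G (F x) = h.choose := by
      simp only [hGdef]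
      rw [dif_pos h]
    rw [hval]
    have hle := hexp _ hspec.1 _ hx
    rw [hspec.2, sub_self, norm_zero, mul_zero] at hle
    have : ‖h.choose - x‖ = 0 := le_antisymm hle (norm_nonneg _)
    have := norm_eq_zero.1 this
    exact sub_eq_zero.1 this
  have hlip : LipschitzOnWith κ G (F '' S) := by
    apply LipschitzOnWith.of_dist_le_mul
    rintro y ⟨x, hx, rfl⟩ y' ⟨x', hx', rfl⟩
    rw [hGF x hx, hGF x' hx', dist_eq_norm, dist_eq_norm]
    exact hexp x hx x' hx'
  have hsub : S ∩ F ⁻¹' A ⊆ G '' (F '' S ∩ A) := by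
    rintro x ⟨hxS, hxA⟩
    exact ⟨F x, ⟨Set.mem_image_of_mem F hxS, hxA⟩, hGF x hxS⟩
  have h1 : volume (S ∩ F ⁻¹' A) ≤ (κ:ℝ≥0∞) ^ (d:ℝ) * volume A := by
    calc volume (S ∩ F ⁻¹' A) ≤ volume (G '' (F '' S ∩ A)) := measure_mono hsub
    _ = μH[(d:ℝ)] (G '' (F '' S ∩ A)) := by rw [hμH]
    _ ≤ (κ:ℝ≥0∞) ^ (d:ℝ) * μH[(d:ℝ)] (F '' S ∩ A) :=
        (hlip.mono Set.inter_subset_left).hausdorffMeasure_image_le (Nat.cast_nonneg d)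
    _ ≤ (κ:ℝ≥0∞) ^ (d:ℝ) * μH[(d:ℝ)] A :=
        mul_le_mul_right (measure_mono Set.inter_subset_right) _
    _ = (κ:ℝ≥0∞) ^ (d:ℝ) * volume A := by rw [hμH]
  have h2 : volume (Sᶜ ∩ F ⁻¹' A) ≤ volume A := by
    have hss : Sᶜ ∩ F ⁻¹' A ⊆ (fun x => x + w) ⁻¹' A := by
      rintro x ⟨hxS, hxA⟩
      have := htrans x hxS
      simp only [Set.mem_preimage] at hxA ⊢
      rwa [this] at hxA
    calc volume (Sᶜ ∩ F ⁻¹' A) ≤ volume ((fun x => x + w) ⁻¹' A) := measure_mono hss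
    _ = volume A := measure_preimage_add_right volume w A
  calc volume (F ⁻¹' A) = volume ((S ∩ F ⁻¹' A) ∪ (Sᶜ ∩ F ⁻¹' A)) := by
        rw [← Set.union_inter_distrib_right, Set.union_compl_self, Set.univ_inter]
  _ ≤ volume (S ∩ F ⁻¹' A) + volume (Sᶜ ∩ F ⁻¹' A) := measure_union_le _ _
  _ ≤ (κ:ℝ≥0∞) ^ (d:ℝ) * volume A + 1 * volume A := by
      rw [one_mul]; exact add_le_add h1 h2
  _ = ((κ:ℝ≥0∞) ^ (d:ℝ) + 1) * volume A := by rw [add_mul]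


/-- Divergence of a vector field `B : ℝ^d → ℝ^d`. -/
noncomputable def divergence (d : ℕ) (B : (Fin d → ℝ) → (Fin d → ℝ)) (y : Fin d → ℝ) : ℝ :=
  ∑ k : Fin d, fderiv ℝ B y (Pi.single k 1) k

/-- The Feynman–Kac operator
`Q_t f (x) = E[ f(Y^x_t) exp(-∫_0^t div B (Y^x_u) du) ]`. -/
noncomputable def feynmanKac (d : ℕ) {Ω : Type*} [MeasureSpace Ω]
    (Y : (Fin d → ℝ) → ℝ → Ω → (Fin d → ℝ)) (B : (Fin d → ℝ) → (Fin d → ℝ))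
    (t : ℝ) (f : (Fin d → ℝ) → ℝ) (x : Fin d → ℝ) : ℝ :=
  ∫ ω, f (Y x t ω) * Real.exp (-∫ s in Set.Ioc (0 : ℝ) t, divergence d B (Y x s ω))

/-- Let `B ∈ C¹_b(ℝ^d, ℝ^d)` and let `Y^x` solve `dY^x_t = -B(Y^x_t) dt + dW_t`,
`Y^x_0 = x`, with `W` a standard `d`-dimensional Brownian motion (encoded here
by `W 0 = 0` and independent Gaussian increments of variance `t - s`).
Then the Feynman–Kac operator `Q_t` is bounded on `L²(ℝ^d)`, uniformly for
`t ∈ [0, T]`: there is `C > 0` (depending only on `‖B‖_∞`, `‖div B‖_∞`, `T`) with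
`‖Q_t f‖_{L²} ≤ C ‖f‖_{L²}`. -/
theorem feynmanKac_L2_bounded (d : ℕ) {Ω : Type*} [MeasureSpace Ω]
    [IsProbabilityMeasure (ℙ : Measure Ω)]
    (T : ℝ) (hT : 0 < T)
    (B : (Fin d → ℝ) → (Fin d → ℝ)) (hB : ContDiff ℝ 1 B)
    (CB : ℝ) (hBbd : ∀ x, ‖B x‖ ≤ CB) (hBderbd : ∀ x, ‖fderiv ℝ B x‖ ≤ CB)
    (W : ℝ → Ω → (Fin d → ℝ))
    (hW0 : ∀ ω, W 0 ω = 0)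
    (hWmeas : ∀ t, Measurable (W t))
    (hWlaw : ∀ s t : ℝ, 0 ≤ s → s < t →
      Measure.map (fun ω => W t ω - W s ω) ℙ =
        Measure.pi fun _ : Fin d => gaussianReal 0 (t - s).toNNReal)
    (hWindep : ∀ s t : ℝ, 0 ≤ s → s ≤ t →
      IndepFun (fun ω => W t ω - W s ω) (fun ω => W s ω) ℙ)
    (Y : (Fin d → ℝ) → ℝ → Ω → (Fin d → ℝ))
    (hYmeas : ∀ x t, Measurable (Y x t))
    (hYjm : ∀ t : ℝ, Measurable fun p : (Fin d → ℝ) × Ω => Y p.1 t p.2)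
    (hSDE : ∀ x (t : ℝ), 0 ≤ t → ∀ ω,
      Y x t ω = x + (-(∫ s in Set.Ioc (0 : ℝ) t, B (Y x s ω))) + W t ω) :
    ∃ C : ℝ, 0 < C ∧ ∀ t ∈ Set.Icc (0 : ℝ) T, ∀ f : (Fin d → ℝ) → ℝ,
      MemLp f 2 (volume : Measure (Fin d → ℝ)) →
      eLpNorm (feynmanKac d Y B t f) 2 (volume : Measure (Fin d → ℝ)) ≤
        ENNReal.ofReal C * eLpNorm f 2 (volume : Measure (Fin d → ℝ)) := by
  
  classical
  have hCB0 : 0 ≤ CB := le_trans (norm_nonneg _) (hBbd 0)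
  -- B is CB-Lipschitz
  have lipB : ∀ a b : (Fin d → ℝ), ‖B a - B b‖ ≤ CB * ‖a - b‖ := by
    have hlip : LipschitzWith CB.toNNReal B := by
      apply lipschitzWith_of_nnnorm_fderiv_le (hB.differentiable one_ne_zero)
      intro x
      rw [← NNReal.coe_le_coe, coe_nnnorm, Real.coe_toNNReal _ hCB0]
      exact hBderbd x
    intro a b
    have h := hlip.dist_le_mul a b
    rwa [dist_eq_norm, dist_eq_norm, Real.coe_toNNReal _ hCB0] at h
  -- pointwise bound on the divergence
  have hdiv : ∀ y, |divergence d B y| ≤ (d:ℝ) * CB := by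
    intro y
    refine (Finset.abs_sum_le_sum_abs _ _).trans ?_
    have hterm : ∀ k : Fin d, |(fderiv ℝ B y) (Pi.single k 1) k| ≤ CB := by
      intro k
      have h1 : |(fderiv ℝ B y) (Pi.single k 1) k| ≤ ‖(fderiv ℝ B y) (Pi.single k 1)‖ := by
        rw [← Real.norm_eq_abs]; exact norm_le_pi_norm _ k
      have h2 : ‖(fderiv ℝ B y) (Pi.single k 1)‖
          ≤ ‖fderiv ℝ B y‖ * ‖(Pi.single k 1 : Fin d → ℝ)‖ :=
        (fderiv ℝ B y).le_opNorm _
      have h3 : ‖(Pi.single k 1 : Fin d → ℝ)‖ ≤ 1 := by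
        refine (pi_norm_le_iff_of_nonneg zero_le_one).2 fun j => ?_
        rcases eq_or_ne j k with rfl | hj
        · simp
        · simp [Pi.single_apply, hj]
      have h4 : ‖fderiv ℝ B y‖ * ‖(Pi.single k 1 : Fin d → ℝ)‖ ≤ CB * 1 :=
        mul_le_mul (hBderbd y) h3 (norm_nonneg _) hCB0
      linarith
    calc ∑ k : Fin d, |(fderiv ℝ B y) (Pi.single k 1) k| ≤ ∑ _k : Fin d, CB :=
          Finset.sum_le_sum (fun k _ => hterm k)
    _ = (d:ℝ) * CB := by
        rw [Finset.sum_const, Finset.card_univ, Fintype.card_fin, nsmul_eq_mul]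
  set κ : ℝ≥0 := (Real.exp (CB * T)).toNNReal with hκdef
  set c' : ℝ≥0∞ := (κ:ℝ≥0∞) ^ (d:ℝ) + 1 with hcdef
  set C : ℝ := Real.exp ((d:ℝ)*CB*T) * Real.sqrt ((Real.exp (CB*T))^d + 1) with hCdef
  have hCpos : 0 < C := by
    apply mul_pos (Real.exp_pos _)
    apply Real.sqrt_pos.2
    positivity
  refine ⟨C, hCpos, ?_⟩
  intro t htI f hf
  obtain ⟨ht0, htT⟩ := htI
  -- measurability of x ↦ Y x t ω
  have hFmeas : ∀ ω : Ω, Measurable (fun x => Y x t ω) := fun ω =>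
    (hYjm t).comp (measurable_id.prodMk measurable_const)
  -- expansivity on the set of good starting points
  have hexp : ∀ ω : Ω, ∀ x ∈ {x | IntegrableOn (fun s => B (Y x s ω)) (Set.Ioc 0 t)},
      ∀ x' ∈ {x | IntegrableOn (fun s => B (Y x s ω)) (Set.Ioc 0 t)},
      ‖x - x'‖ ≤ (κ:ℝ) * ‖(fun x => Y x t ω) x - (fun x => Y x t ω) x'‖ := by
    intro ω x hx x' hx'
    simp only [Set.mem_setOf_eq] at hx hx'
    have hκcoe : (κ:ℝ) = Real.exp (CB*T) := Real.coe_toNNReal _ (Real.exp_nonneg _)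
    have hg : ∀ s ∈ Set.Icc (0:ℝ) t, Y x s ω - Y x' s ω
        = (x - x') - ∫ r in Set.Ioc (0:ℝ) s, (B (Y x r ω) - B (Y x' r ω)) := by
      intro s hs
      rw [MeasureTheory.integral_sub (hx.mono_set (Set.Ioc_subset_Ioc_right hs.2))
        (hx'.mono_set (Set.Ioc_subset_Ioc_right hs.2))]
      rw [hSDE x s hs.1 ω, hSDE x' s hs.1 ω]
      abel
    have key := gronwall_lower (L := CB) (t := t) hCB0 ht0 (x - x')
      (fun s => Y x s ω - Y x' s ω) (fun r => B (Y x r ω) - B (Y x' r ω))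
      (hx.sub hx') hg (fun s _ => lipB _ _)
    refine key.trans ?_
    rw [hκcoe]
    exact mul_le_mul_of_nonneg_right
      (Real.exp_le_exp.2 (mul_le_mul_of_nonneg_left htT hCB0)) (norm_nonneg _)
  have htrans : ∀ ω : Ω, ∀ x ∉ {x | IntegrableOn (fun s => B (Y x s ω)) (Set.Ioc 0 t)},
      (fun x => Y x t ω) x = x + W t ω := by
    intro ω x hx
    have h := hSDE x t ht0 ω
    rw [MeasureTheory.integral_undef hx] at h
    simpa using h
  have hmap : ∀ (ω : Ω) (A : Set (Fin d → ℝ)),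
      volume ((fun x => Y x t ω) ⁻¹' A) ≤ c' * volume A := fun ω A =>
    preimage_measure_bound _ (W t ω) _ (hexp ω) (htrans ω) A
  -- measurable representative of f
  set g : (Fin d → ℝ) → ℝ := hf.1.mk f with hgdef
  have hgm : Measurable g := hf.1.stronglyMeasurable_mk.measurable
  have hfg : f =ᵐ[(volume : Measure (Fin d → ℝ))] g := hf.1.ae_eq_mk
  obtain ⟨N, hN0N, hNmeas, hNnull⟩ := exists_measurable_superset_of_null (ae_iff.mp hfg)
  -- a.e. x, the law of Y x t does not charge N
  have hu : Measurable (fun p : (Fin d → ℝ) × Ω =>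
      N.indicator (fun _ => (1:ℝ≥0∞)) (Y p.1 t p.2)) :=
    (measurable_const.indicator hNmeas).comp (hYjm t)
  have hswap := lintegral_lintegral_swap (μ := (volume : Measure (Fin d → ℝ))) (ν := ℙ)
    (f := fun x ω => N.indicator (fun _ => (1:ℝ≥0∞)) (Y x t ω)) hu.aemeasurable
  have hrhs : ∫⁻ ω, ∫⁻ x, N.indicator (fun _ => (1:ℝ≥0∞)) (Y x t ω) ∂volume ∂ℙ = 0 := by
    have hz : ∀ ω : Ω, ∫⁻ x, N.indicator (fun _ => (1:ℝ≥0∞)) (Y x t ω) ∂volume = 0 := by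
      intro ω
      rw [lintegral_indicator_const_comp (hFmeas ω) hNmeas]
      have h := hmap ω N
      rw [hNnull, mul_zero] at h
      simpa using le_antisymm (by simpa using h) zero_le
    simp [hz]
  have hx0 : ∫⁻ x, (∫⁻ ω, N.indicator (fun _ => (1:ℝ≥0∞)) (Y x t ω) ∂ℙ) ∂volume = 0 := by
    rw [hswap]; exact hrhs
  have hmx : Measurable fun x => ∫⁻ ω, N.indicator (fun _ => (1:ℝ≥0∞)) (Y x t ω) ∂ℙ :=
    Measurable.lintegral_prod_right' hu
  have hae0 := (lintegral_eq_zero_iff hmx).1 hx0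
  have haeQ : ∀ᵐ x ∂(volume : Measure (Fin d → ℝ)),
      feynmanKac d Y B t f x = feynmanKac d Y B t g x := by
    filter_upwards [hae0] with x hx
    have hx' : ℙ ((fun ω => Y x t ω) ⁻¹' N) = 0 := by
      rw [lintegral_indicator_const_comp (hYmeas x t) hNmeas] at hx
      simpa using hx
    have hae : ∀ᵐ ω ∂ℙ, Y x t ω ∉ N := measure_eq_zero_iff_ae_notMem.mp hx'
    unfold feynmanKac
    apply integral_congr_ae
    filter_upwards [hae] with ω hω
    have hfgω : f (Y x t ω) = g (Y x t ω) := by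
      by_contra hne
      exact hω (hN0N hne)
    rw [hfgω]
  rw [eLpNorm_congr_ae haeQ, eLpNorm_congr_ae hfg]
  -- main estimate for the measurable representative g
  have hdCB : 0 ≤ (d:ℝ) * CB := mul_nonneg (Nat.cast_nonneg d) hCB0
  have hJ : ∀ (x : Fin d → ℝ) (ω : Ω),
      |∫ s in Set.Ioc (0:ℝ) t, divergence d B (Y x s ω)| ≤ (d:ℝ) * CB * T := by
    intro x ω
    by_cases hint : IntegrableOn (fun s => divergence d B (Y x s ω)) (Set.Ioc 0 t)
    · have h1 : ‖∫ s in Set.Ioc (0:ℝ) t, divergence d B (Y x s ω)‖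
          ≤ ∫ s in Set.Ioc (0:ℝ) t, ‖divergence d B (Y x s ω)‖ :=
        norm_integral_le_integral_norm _
      have h2 : (∫ s in Set.Ioc (0:ℝ) t, ‖divergence d B (Y x s ω)‖)
          ≤ ∫ _s in Set.Ioc (0:ℝ) t, ((d:ℝ) * CB) := by
        refine setIntegral_mono_on hint.norm ?_ measurableSet_Ioc ?_
        · exact integrableOn_const (by rw [Real.volume_Ioc]; exact ENNReal.ofReal_ne_top)
        · intro s _
          rw [Real.norm_eq_abs]; exact hdiv _
      have h3 : (∫ _s in Set.Ioc (0:ℝ) t, ((d:ℝ)*CB)) = ((d:ℝ)*CB) * t := by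
        rw [setIntegral_const, measureReal_def, Real.volume_Ioc, smul_eq_mul,
          ENNReal.toReal_ofReal (by linarith)]
        ring
      rw [Real.norm_eq_abs] at h1
      have h4 : ((d:ℝ)*CB)*t ≤ (d:ℝ)*CB*T := mul_le_mul_of_nonneg_left htT hdCB
      linarith
    · rw [integral_undef hint]
      simp only [abs_zero]
      nlinarith
  set E0 : ℝ≥0∞ := ENNReal.ofReal (Real.exp ((d:ℝ)*CB*T)) with hE0def
  have hE0ne : E0 ≠ ⊤ := ENNReal.ofReal_ne_top
  have hpt : ∀ x, (‖feynmanKac d Y B t g x‖₊ : ℝ≥0∞)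
      ≤ E0 * ∫⁻ ω, (‖g (Y x t ω)‖₊ : ℝ≥0∞) ∂ℙ := by
    intro x
    refine (MeasureTheory.enorm_integral_le_lintegral_enorm _).trans ?_
    rw [← lintegral_const_mul' _ _ hE0ne]
    refine lintegral_mono fun ω => ?_
    rw [enorm_mul, mul_comm]
    refine mul_le_mul_left ?_ _
    rw [Real.enorm_eq_ofReal (Real.exp_nonneg _)]
    refine ENNReal.ofReal_le_ofReal (Real.exp_le_exp.2 ?_)
    exact le_trans (neg_le_abs _) (hJ x ω)
  have hgsq_meas : Measurable fun p : (Fin d → ℝ) × Ω =>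
      (‖g (Y p.1 t p.2)‖₊ : ℝ≥0∞) ^ (2:ℝ) :=
    ((hgm.comp (hYjm t)).nnnorm.coe_nnreal_ennreal).pow_const _
  have hCS : ∀ x, (∫⁻ ω, (‖g (Y x t ω)‖₊ : ℝ≥0∞) ∂ℙ)
      ≤ (∫⁻ ω, (‖g (Y x t ω)‖₊ : ℝ≥0∞) ^ (2:ℝ) ∂ℙ) ^ (1/2:ℝ) := by
    intro x
    have h22 : Real.HolderConjugate 2 2 := Real.HolderConjugate.two_two
    have hmg : AEMeasurable (fun ω => (‖g (Y x t ω)‖₊ : ℝ≥0∞)) ℙ :=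
      ((hgm.comp (hYmeas x t)).nnnorm.coe_nnreal_ennreal).aemeasurable
    have h := ENNReal.lintegral_mul_le_Lp_mul_Lq ℙ h22 hmg aemeasurable_const
      (g := fun _ => (1:ℝ≥0∞))
    simpa [ENNReal.one_rpow, lintegral_one, measure_univ] using h
  have hsq : ∀ x, (‖feynmanKac d Y B t g x‖₊ : ℝ≥0∞) ^ (2:ℝ)
      ≤ E0 ^ (2:ℝ) * ∫⁻ ω, (‖g (Y x t ω)‖₊ : ℝ≥0∞) ^ (2:ℝ) ∂ℙ := by
    intro x
    have h1 := (hpt x).trans (mul_le_mul_right (hCS x) E0)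
    have h2 := ENNReal.rpow_le_rpow h1 (by norm_num : (0:ℝ) ≤ 2)
    calc (‖feynmanKac d Y B t g x‖₊ : ℝ≥0∞) ^ (2:ℝ)
        ≤ (E0 * (∫⁻ ω, (‖g (Y x t ω)‖₊ : ℝ≥0∞) ^ (2:ℝ) ∂ℙ) ^ (1/2:ℝ)) ^ (2:ℝ) := h2
    _ = E0 ^ (2:ℝ) * ((∫⁻ ω, (‖g (Y x t ω)‖₊ : ℝ≥0∞) ^ (2:ℝ) ∂ℙ) ^ ((1/2:ℝ)*2)) := by
        rw [ENNReal.mul_rpow_of_nonneg _ _ (by norm_num : (0:ℝ) ≤ 2), ← ENNReal.rpow_mul]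
    _ = E0 ^ (2:ℝ) * ∫⁻ ω, (‖g (Y x t ω)‖₊ : ℝ≥0∞) ^ (2:ℝ) ∂ℙ := by norm_num
  have hE2ne : E0 ^ (2:ℝ) ≠ ⊤ :=
    ENNReal.rpow_ne_top_of_nonneg (by norm_num) hE0ne
  have main : ∫⁻ x, (‖feynmanKac d Y B t g x‖₊ : ℝ≥0∞) ^ (2:ℝ) ∂volume
      ≤ E0 ^ (2:ℝ) * (c' * ∫⁻ y, (‖g y‖₊ : ℝ≥0∞) ^ (2:ℝ) ∂volume) := by
    calc ∫⁻ x, (‖feynmanKac d Y B t g x‖₊ : ℝ≥0∞) ^ (2:ℝ) ∂volume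
        ≤ ∫⁻ x, E0 ^ (2:ℝ) * ∫⁻ ω, (‖g (Y x t ω)‖₊ : ℝ≥0∞) ^ (2:ℝ) ∂ℙ ∂volume :=
          lintegral_mono hsq
    _ = E0 ^ (2:ℝ) * ∫⁻ x, ∫⁻ ω, (‖g (Y x t ω)‖₊ : ℝ≥0∞) ^ (2:ℝ) ∂ℙ ∂volume :=
          lintegral_const_mul' _ _ hE2ne
    _ = E0 ^ (2:ℝ) * ∫⁻ ω, ∫⁻ x, (‖g (Y x t ω)‖₊ : ℝ≥0∞) ^ (2:ℝ) ∂volume ∂ℙ := by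
          rw [lintegral_lintegral_swap hgsq_meas.aemeasurable]
    _ ≤ E0 ^ (2:ℝ) * ∫⁻ _ω, c' * ∫⁻ y, (‖g y‖₊ : ℝ≥0∞) ^ (2:ℝ) ∂volume ∂ℙ := by
          refine mul_le_mul_right (lintegral_mono fun ω => ?_) _
          have hmeasle : Measure.map (fun x => Y x t ω) volume ≤ c' • volume := by
            refine Measure.le_iff.2 fun A hA => ?_
            rw [Measure.map_apply (hFmeas ω) hA, Measure.smul_apply, smul_eq_mul]
            exact hmap ω A
          have heq : ∫⁻ x, (‖g (Y x t ω)‖₊ : ℝ≥0∞) ^ (2:ℝ) ∂volume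
              = ∫⁻ y, (‖g y‖₊ : ℝ≥0∞) ^ (2:ℝ)
                  ∂(Measure.map (fun x => Y x t ω) volume) := by
            rw [lintegral_map ((hgm.nnnorm.coe_nnreal_ennreal).pow_const _) (hFmeas ω)]
          rw [heq, ← smul_eq_mul, ← lintegral_smul_measure]
          exact lintegral_mono' hmeasle (le_refl _)
    _ = E0 ^ (2:ℝ) * (c' * ∫⁻ y, (‖g y‖₊ : ℝ≥0∞) ^ (2:ℝ) ∂volume) := by
          rw [lintegral_const, measure_univ, mul_one]
  -- conclude
  rw [eLpNorm_eq_lintegral_rpow_enorm_toReal two_ne_zero ENNReal.ofNat_ne_top,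
      eLpNorm_eq_lintegral_rpow_enorm_toReal two_ne_zero ENNReal.ofNat_ne_top]
  simp only [ENNReal.toReal_ofNat]
  refine le_trans (ENNReal.rpow_le_rpow main (by norm_num : (0:ℝ) ≤ 1/2)) ?_
  rw [ENNReal.mul_rpow_of_nonneg _ _ (by norm_num : (0:ℝ) ≤ 1/2),
      ENNReal.mul_rpow_of_nonneg _ _ (by norm_num : (0:ℝ) ≤ 1/2),
      ← ENNReal.rpow_mul, ← mul_assoc]
  have hE0half : E0 ^ ((2:ℝ) * (1/2:ℝ)) = E0 := by
    norm_num
  rw [hE0half]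
  refine mul_le_mul_left ?_ _
  have hc'eq : c' = ENNReal.ofReal ((Real.exp (CB*T))^d + 1) := by
    rw [hcdef, hκdef]
    rw [ENNReal.ofReal_add (by positivity) zero_le_one, ENNReal.ofReal_one]
    congr 1
    rw [ENNReal.rpow_natCast, ← ENNReal.coe_pow, ← Real.toNNReal_pow (Real.exp_nonneg _)]
    rfl
  rw [hc'eq, ENNReal.ofReal_rpow_of_nonneg (by positivity) (by norm_num),
    hE0def, ← ENNReal.ofReal_mul (Real.exp_nonneg _), hCdef]
  apply ENNReal.ofReal_le_ofReal
  rw [Real.sqrt_eq_rpow]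
end

section
/- Let u : [0,T] → X be continuous into a Banach space X, let A be a densely defined closed operator generating a strongly continuous semigroup (Q_t) of bounded operators on X, and let f ∈ L¹([0,T], X). If u is a weak solution of u'(t) = A u(t) + f(t) with u(0) = x ∈ D(A), then u(t) = Q_t x + ∫_0^t Q_{t-s} f(s) ds for all t ∈ [0,T]. In particular the weak solution is unique. -/
open MeasureTheory Set Filter intervalIntegral

section aux

variable {X : Type*} [NormedAddCommGroup X] [NormedSpace ℝ X]

/-- Hahn-Banach separation: a point annihilated by every functional vanishing on a
closed submodule lies in the submodule. -/
lemma aux_mem_of_dual_vanish {M : Submodule ℝ X} (hM : IsClosed (M : Set X)) (z : X)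
    (h : ∀ φ : X →L[ℝ] ℝ, (∀ m ∈ M, φ m = 0) → φ z = 0) : z ∈ M := by
  by_contra hz
  obtain ⟨φ, c, hc1, hc2⟩ := geometric_hahn_banach_point_closed M.convex hM hz
  have hφM : ∀ m ∈ M, φ m = 0 := by
    intro m hm
    by_contra hne
    have h1 : ∀ r : ℝ, c < r * φ m := by
      intro r
      have := hc2 (r • m) (M.smul_mem r hm)
      simpa using this
    have := h1 ((c - 1) / φ m)
    rw [div_mul_cancel₀ _ hne] at this
    linarith
  have hz0 : φ z = 0 := h φ hφM
  have h0 : c < 0 := by simpa using hc2 0 M.zero_mem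
  rw [hz0] at hc1
  linarith

/-- Banach–Steinhaus bound for a strongly continuous operator family. -/
lemma aux_bound [CompleteSpace X] (Q : ℝ → X →L[ℝ] X)
    (hQcont : ∀ y : X, ContinuousOn (fun t => Q t y) (Set.Ici 0)) (a : ℝ) :
    ∃ M : ℝ, 1 ≤ M ∧ ∀ σ ∈ Set.Icc (0:ℝ) a, ‖Q σ‖ ≤ M := by
  have hpt : ∀ y : X, ∃ C, ∀ σ : Set.Icc (0:ℝ) a, ‖Q (σ : ℝ) y‖ ≤ C := by
    intro y
    obtain ⟨C, hC⟩ := isCompact_Icc.exists_bound_of_continuousOn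
      ((hQcont y).mono (fun x hx => hx.1))
    exact ⟨C, fun σ => hC σ σ.2⟩
  obtain ⟨C, hC⟩ := banach_steinhaus (g := fun σ : Set.Icc (0:ℝ) a => Q (σ : ℝ)) hpt
  exact ⟨max C 1, le_max_right _ _, fun σ hσ => le_trans (hC ⟨σ, hσ⟩) (le_max_left _ _)⟩

/-- Joint continuity of `(σ, y) ↦ Q (clamp σ) y`. -/
lemma aux_psi_cont [CompleteSpace X] (Q : ℝ → X →L[ℝ] X)
    (hQcont : ∀ y : X, ContinuousOn (fun t => Q t y) (Set.Ici 0))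
    (a M : ℝ) (ha : 0 ≤ a) (hM : ∀ σ ∈ Set.Icc (0:ℝ) a, ‖Q σ‖ ≤ M) :
    Continuous (fun p : ℝ × X => Q (min (max p.1 0) a) p.2) := by
  have hproj : Continuous fun σ : ℝ => min (max σ 0) a :=
    (continuous_id.max continuous_const).min continuous_const
  have hmem : ∀ σ : ℝ, min (max σ 0) a ∈ Set.Icc (0:ℝ) a := fun σ =>
    ⟨le_min (le_max_right _ _) ha, min_le_right _ _⟩
  rw [continuous_iff_continuousAt]
  rintro ⟨σ₀, y₀⟩
  have h1 : Tendsto (fun p : ℝ × X => Q (min (max p.1 0) a) y₀) (nhds (σ₀, y₀))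
      (nhds (Q (min (max σ₀ 0) a) y₀)) := by
    have hc : Continuous fun σ : ℝ => Q (min (max σ 0) a) y₀ :=
      (hQcont y₀).comp_continuous hproj (fun σ => (hmem σ).1)
    exact (hc.continuousAt).comp (continuousAt_fst)
  have h2 : Tendsto (fun p : ℝ × X => Q (min (max p.1 0) a) (p.2 - y₀)) (nhds (σ₀, y₀))
      (nhds 0) := by
    have hb : Tendsto (fun p : ℝ × X => M * ‖p.2 - y₀‖) (nhds (σ₀, y₀)) (nhds 0) := by
      have : Tendsto (fun p : ℝ × X => p.2 - y₀) (nhds (σ₀, y₀)) (nhds 0) := by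
        have h := (continuous_snd.sub (continuous_const (y := y₀))).tendsto (σ₀, y₀)
        simpa [Pi.sub_def] using h
      simpa using (this.norm.const_mul M)
    refine squeeze_zero_norm (fun p => ?_) hb
    calc ‖Q (min (max p.1 0) a) (p.2 - y₀)‖
        ≤ ‖Q (min (max p.1 0) a)‖ * ‖p.2 - y₀‖ := (Q _).le_opNorm _
      _ ≤ M * ‖p.2 - y₀‖ := by
          gcongr
          exact hM _ (hmem _)
  have := h2.add h1
  rw [zero_add] at this
  have heq : (fun p : ℝ × X => Q (min (max p.1 0) a) (p.2 - y₀)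
      + Q (min (max p.1 0) a) y₀) = fun p : ℝ × X => Q (min (max p.1 0) a) p.2 := by
    funext p; rw [← map_add, sub_add_cancel]
  rw [heq] at this
  exact this

end aux

set_option maxHeartbeats 1000000 in
/-- Ball's theorem: let `A` be a densely defined closed operator on a Banach
space `X` generating a strongly continuous semigroup `(Q_t)` of bounded
operators, let `f ∈ L¹([0,T], X)`, and let `u ∈ C([0,T], X)` be a weak solution
of `u' = A u + f`, `u(0) = x₀ ∈ D(A)` (weak solution: for every `v ∈ D(A*)`,
`⟨u(t), v⟩ = ⟨x₀, v⟩ + ∫_0^t (⟨u(s), A*v⟩ + ⟨f(s), v⟩) ds`).  Then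
`u(t) = Q_t x₀ + ∫_0^t Q_{t-s} f(s) ds` for all `t ∈ [0,T]`; in particular the
weak solution is unique. -/
theorem ball_weak_solution_representation
    {X : Type*} [NormedAddCommGroup X] [NormedSpace ℝ X] [CompleteSpace X]
    (T : ℝ) (hT : 0 < T)
    (D : Submodule ℝ X) (hDdense : Dense (D : Set X))
    (A : D →ₗ[ℝ] X)
    (hclosed : IsClosed {p : X × X | ∃ h : p.1 ∈ D, A ⟨p.1, h⟩ = p.2})
    (Q : ℝ → X →L[ℝ] X)
    (hQ0 : Q 0 = ContinuousLinearMap.id ℝ X)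
    (hQsem : ∀ s t : ℝ, 0 ≤ s → 0 ≤ t → Q (s + t) = (Q s).comp (Q t))
    (hQcont : ∀ y : X, ContinuousOn (fun t => Q t y) (Set.Ici 0))
    (hgen : ∀ y : D, Filter.Tendsto (fun t : ℝ => t⁻¹ • (Q t (y : X) - (y : X)))
      (nhdsWithin 0 (Set.Ioi 0)) (nhds (A y)))
    (f : ℝ → X) (hf : IntegrableOn f (Set.Ioc 0 T))
    (u : ℝ → X) (hu : ContinuousOn u (Set.Icc 0 T))
    (x₀ : X) (hx₀ : x₀ ∈ D) (hu0 : u 0 = x₀)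
    (hweak : ∀ v w : StrongDual ℝ X,
      (∀ y : D, v (A y) = w (y : X)) →
      ∀ t ∈ Set.Icc (0 : ℝ) T,
        v (u t) = v x₀ + ∫ s in Set.Ioc (0 : ℝ) t, (w (u s) + v (f s))) :
    ∀ t ∈ Set.Icc (0 : ℝ) T,
      u t = Q t x₀ + ∫ s in Set.Ioc (0 : ℝ) t, Q (t - s) (f s) := by
  intro t ht
  obtain ⟨ht0, htT⟩ := ht
  rcases eq_or_lt_of_le ht0 with h0 | h0t
  · simp [← h0, hu0, hQ0]
  -- basic integrability
  have huInt : IntegrableOn u (Icc 0 T) := hu.integrableOn_compact isCompact_Icc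
  have hfInt : IntegrableOn f (Icc 0 T) := by
    rw [integrableOn_Icc_iff_integrableOn_Ioc]; exact hf
  -- primitives
  set F : ℝ → X := fun s => ∫ r in (0:ℝ)..s, u r with hFdef
  set If : ℝ → X := fun s => ∫ r in (0:ℝ)..s, f r with hIfdef
  have hIocu : ∀ s : ℝ, 0 ≤ s → (∫ r in Ioc (0:ℝ) s, u r) = F s :=
    fun s hs => (integral_of_le hs).symm
  have hIocf : ∀ s : ℝ, 0 ≤ s → (∫ r in Ioc (0:ℝ) s, f r) = If s :=
    fun s hs => (integral_of_le hs).symm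
  have hFc : ContinuousOn F (Icc 0 T) := by
    refine (continuousOn_primitive huInt).congr fun s hs => (integral_of_le hs.1)
  have hIfc : ContinuousOn If (Icc 0 T) := by
    refine (continuousOn_primitive hfInt).congr fun s hs => (integral_of_le hs.1)
  -- Step 1 : the graph membership
  have key : ∀ s ∈ Icc (0:ℝ) T, ∃ hD : F s ∈ D, A ⟨F s, hD⟩ = u s - x₀ - If s := by
    set M₀ : Submodule ℝ (X × X) := LinearMap.range (D.subtype.prod A) with hM₀def
    have hM₀set : (M₀ : Set (X × X)) = {p : X × X | ∃ h : p.1 ∈ D, A ⟨p.1, h⟩ = p.2} := by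
      ext ⟨x₁, x₂⟩
      constructor
      · rintro ⟨y, hy⟩
        rw [LinearMap.prod_apply] at hy
        obtain ⟨h1, h2⟩ := Prod.mk.injEq .. ▸ hy
        refine ⟨h1 ▸ y.2, ?_⟩
        rw [← h2]
        congr 1
        exact Subtype.ext h1.symm
      · rintro ⟨h, hA⟩
        exact ⟨⟨x₁, h⟩, by simp [LinearMap.prod_apply, hA]⟩
    have hM₀closed : IsClosed (M₀ : Set (X × X)) := by rw [hM₀set]; exact hclosed
    intro s hs
    have hus : IntegrableOn u (Ioc 0 s) :=
      huInt.mono_set ((Ioc_subset_Icc_self).trans (Icc_subset_Icc le_rfl hs.2))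
    have hfs : IntegrableOn f (Ioc 0 s) := hf.mono_set (Ioc_subset_Ioc_right hs.2)
    have hmem : (F s, u s - x₀ - If s) ∈ M₀ := by
      apply aux_mem_of_dual_vanish hM₀closed
      intro φ hφ
      set p : X →L[ℝ] ℝ := φ.comp (ContinuousLinearMap.inl ℝ X X) with hpdef
      set q : X →L[ℝ] ℝ := φ.comp (ContinuousLinearMap.inr ℝ X X) with hqdef
      have hpq : ∀ x y : X, φ (x, y) = p x + q y := by
        intro x y
        have hxy : (x, y) = ((x, (0:X)) + ((0:X), y)) := by simp
        rw [hxy, map_add]; rfl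
      have hAq : ∀ y : D, q (A y) = (-p) ((y : X)) := by
        intro y
        have h0 : φ ((y : X), A y) = 0 := hφ _ ⟨y, rfl⟩
        rw [hpq] at h0
        simp only [ContinuousLinearMap.neg_apply]
        linarith
      have hw := hweak q (-p) hAq s hs
      have hsplit : (∫ r in Ioc (0:ℝ) s, ((-p) (u r) + q (f r)))
          = -(p (F s)) + q (If s) := by
        rw [integral_add ((-p).integrable_comp hus) (q.integrable_comp hfs),
          ContinuousLinearMap.integral_comp_comm _ hus,
          ContinuousLinearMap.integral_comp_comm _ hfs, hIocu s hs.1, hIocf s hs.1]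
        simp
      rw [hpq]
      simp only [map_sub]
      rw [hw, hsplit]
      ring
    rw [← SetLike.mem_coe, hM₀set] at hmem
    exact hmem
  -- Step 2 : uniform bound and the jointly continuous ψ
  obtain ⟨M, hM1, hMb⟩ := aux_bound Q hQcont (T + 1)
  set ψ : ℝ × X → X := fun p => Q (min (max p.1 0) (T+1)) p.2 with hψdef
  have hψc : Continuous ψ := aux_psi_cont Q hQcont (T+1) M (by linarith) hMb
  have hψeq : ∀ σ ∈ Icc (0:ℝ) (T+1), ∀ y : X, ψ (σ, y) = Q σ y := by
    intro σ hσ y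
    simp only [hψdef, max_eq_left hσ.1, min_eq_left hσ.2]
  -- Step 3 : representation of F t
  -- generic FTC right-derivative helper
  have hFTC : ∀ (c : ℝ → X) (t' : ℝ), t ≤ t' → IntegrableOn c (Icc 0 t') volume →
      ContinuousOn c (Icc 0 t') → ∀ s ∈ Ico (0:ℝ) t,
      HasDerivWithinAt (fun b => ∫ r in (0:ℝ)..b, c r) (c s) (Ici s) s := by
    intro c t' htt' hint hcont s hs
    have hIccmem : Icc (0:ℝ) t' ∈ nhdsWithin s (Ici s) := by
      apply mem_nhdsWithin.2
      refine ⟨Iio t, isOpen_Iio, hs.2, fun x hx => ⟨le_trans hs.1 hx.2, le_trans hx.1.le htt'⟩⟩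
    have hIccmem' : Icc (0:ℝ) t' ∈ nhdsWithin s (Ioi s) := by
      apply mem_nhdsWithin.2
      refine ⟨Iio t, isOpen_Iio, hs.2, fun x hx => ⟨le_trans hs.1 hx.2.le, le_trans hx.1.le htt'⟩⟩
    refine integral_hasDerivWithinAt_right ?_
      ⟨Icc 0 t', hIccmem', hint.aestronglyMeasurable⟩
      ((hcont s ⟨hs.1, le_trans hs.2.le htt'⟩).mono_of_mem_nhdsWithin hIccmem')
    refine (hint.mono_set ?_).intervalIntegrable
    rw [uIcc_of_le hs.1]
    exact Icc_subset_Icc le_rfl (le_trans hs.2.le htt')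
  have hsubT : Icc (0:ℝ) t ⊆ Icc (0:ℝ) T := Icc_subset_Icc le_rfl htT
  have hφcont : ContinuousOn (fun r => ψ (t - r, x₀ + If r)) (Icc 0 t) := by
    apply hψc.comp_continuousOn
    exact ((continuous_const.sub continuous_id).continuousOn).prodMk
      (continuousOn_const.add (hIfc.mono hsubT))
  have hφint : IntegrableOn (fun r => ψ (t - r, x₀ + If r)) (Icc 0 t) :=
    hφcont.integrableOn_compact isCompact_Icc
  have hrep : F t = ∫ r in (0:ℝ)..t, ψ (t - r, x₀ + If r) := by
    have hgcont : ContinuousOn (fun s => ψ (t - s, F s)) (Icc 0 t) := by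
      apply hψc.comp_continuousOn
      exact ((continuous_const.sub continuous_id).continuousOn).prodMk (hFc.mono hsubT)
    have hGcont : ContinuousOn (fun b => ∫ r in (0:ℝ)..b, ψ (t - r, x₀ + If r)) (Icc 0 t) :=
      (continuousOn_primitive hφint).congr fun s hs => (integral_of_le hs.1)
    have hGderiv : ∀ s ∈ Ico (0:ℝ) t,
        HasDerivWithinAt (fun b => ∫ r in (0:ℝ)..b, ψ (t - r, x₀ + If r))
          (ψ (t - s, x₀ + If s)) (Ici s) s :=
      fun s hs => hFTC (fun r => ψ (t - r, x₀ + If r)) t le_rfl hφint hφcont s hs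
    have hgderiv : ∀ s ∈ Ico (0:ℝ) t,
        HasDerivWithinAt (fun s' => ψ (t - s', F s'))
          (ψ (t - s, x₀ + If s)) (Ici s) s := by
      intro s hs
      have hsIcc : s ∈ Icc (0:ℝ) T := ⟨hs.1, le_trans hs.2.le htT⟩
      obtain ⟨hD, hA⟩ := key s hsIcc
      have hF' : HasDerivWithinAt F (u s) (Ici s) s := hFTC u T htT huInt hu s hs
      rw [hasDerivWithinAt_iff_tendsto_slope, Set.Ici_sdiff_left]
      have hslopeF : Tendsto (fun s' => (s' - s)⁻¹ • (F s' - F s))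
          (nhdsWithin s (Ioi s)) (nhds (u s)) := by
        have h1 := hasDerivWithinAt_iff_tendsto_slope.1 hF'
        rw [Set.Ici_sdiff_left] at h1
        exact h1.congr fun s' => slope_def_module F s s'
      have hmapt : Tendsto (fun s' : ℝ => t - s') (nhdsWithin s (Ioi s)) (nhds (t - s)) :=
        ((continuous_const.sub continuous_id).tendsto s).mono_left nhdsWithin_le_nhds
      have htsmem : t - s ∈ Icc (0:ℝ) (T+1) := ⟨by linarith [hs.2], by linarith [hs.1]⟩
      have hE1 : Tendsto (fun s' => ψ (t - s', (s' - s)⁻¹ • (F s' - F s)))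
          (nhdsWithin s (Ioi s)) (nhds (Q (t - s) (u s))) := by
        have hpair := hmapt.prodMk_nhds hslopeF
        have h2 := (hψc.continuousAt (x := (t - s, u s))).tendsto.comp hpair
        simp only [Function.comp_def] at h2
        rwa [hψeq (t - s) htsmem (u s)] at h2
      have hmap0 : Tendsto (fun s' : ℝ => s' - s) (nhdsWithin s (Ioi s))
          (nhdsWithin 0 (Ioi 0)) := by
        apply tendsto_nhdsWithin_of_tendsto_nhds_of_eventually_within
        · have h3 : Tendsto (fun s' : ℝ => s' - s) (nhdsWithin s (Ioi s)) (nhds (s - s)) :=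
            ((continuous_id.sub (continuous_const (y := s))).tendsto s).mono_left
              nhdsWithin_le_nhds
          rwa [sub_self] at h3
        · filter_upwards [self_mem_nhdsWithin] with s' hs' using sub_pos.2 (mem_Ioi.1 hs')
      have hgenlim : Tendsto (fun s' => (s' - s)⁻¹ • (Q (s' - s) (F s) - F s))
          (nhdsWithin s (Ioi s)) (nhds (A ⟨F s, hD⟩)) := by
        have h4 := (hgen ⟨F s, hD⟩).comp hmap0
        simpa [Function.comp_def] using h4
      have hE2 : Tendsto (fun s' => ψ (t - s', (s' - s)⁻¹ • (Q (s' - s) (F s) - F s)))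
          (nhdsWithin s (Ioi s)) (nhds (Q (t - s) (u s - x₀ - If s))) := by
        have hpair := hmapt.prodMk_nhds hgenlim
        have h2 := (hψc.continuousAt (x := (t - s, A ⟨F s, hD⟩))).tendsto.comp hpair
        simp only [Function.comp_def] at h2
        rwa [hψeq (t - s) htsmem _, hA] at h2
      have hsum := hE1.sub hE2
      have hval : Q (t - s) (u s) - Q (t - s) (u s - x₀ - If s) = ψ (t - s, x₀ + If s) := by
        rw [← map_sub, hψeq (t - s) htsmem]
        congr 1
        abel
      rw [hval] at hsum
      refine Tendsto.congr' ?_ hsum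
      have hlt : ∀ᶠ s' in nhdsWithin s (Ioi s), s' < t :=
        eventually_nhdsWithin_of_eventually_nhds (Filter.Tendsto.eventually_lt_const hs.2 tendsto_id)
      filter_upwards [self_mem_nhdsWithin, hlt] with s' hs1 hs2
      have hs0 : (0:ℝ) ≤ s := hs.1
      have hss' : s < s' := hs1
      have h1 : (0:ℝ) ≤ t - s' := by linarith
      have h2 : (0:ℝ) ≤ s' - s := by linarith
      have hcomp : Q (t - s') (Q (s' - s) (F s)) = Q (t - s) (F s) := by
        have h5 := hQsem (t - s') (s' - s) h1 h2
        have h3 : t - s' + (s' - s) = t - s := by ring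
        rw [h3] at h5
        rw [h5]
        rfl
      rw [slope_def_module]
      rw [hψeq (t - s') ⟨h1, by linarith⟩, hψeq (t - s') ⟨h1, by linarith⟩,
        hψeq (t - s') ⟨h1, by linarith⟩, hψeq (t - s) htsmem]
      rw [_root_.map_smul, _root_.map_smul, map_sub, map_sub, hcomp]
      rw [← smul_sub, sub_sub_sub_cancel_right]
    have heq := eq_of_has_deriv_right_eq hgderiv hGderiv hgcont hGcont ?_ t
      (right_mem_Icc.2 h0t.le)
    · have hzero : t - t = (0:ℝ) := by ring
      rw [hzero, hψeq 0 ⟨le_rfl, by linarith⟩, hQ0] at heq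
      exact heq
    · have hF0 : F 0 = 0 := integral_same
      rw [hF0, integral_same]
      simp [hψdef]
  -- Step 4 : Fubini
  set Sv : ℝ → X → X := fun τ y => ∫ σ in (0:ℝ)..τ, Q σ y with hSvdef
  have hfRes : IntegrableOn f (Ioc 0 t) := hf.mono_set (Ioc_subset_Ioc_right htT)
  have hfaem : AEStronglyMeasurable f (volume.restrict (Ioc (0:ℝ) t)) :=
    hfRes.aestronglyMeasurable
  have hclampmem : ∀ σ : ℝ, min (max σ 0) (T+1) ∈ Icc (0:ℝ) (T+1) := fun σ =>
    ⟨le_min (le_max_right _ _) (by linarith), min_le_right _ _⟩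
  set k : ℝ × ℝ → X := fun p => ψ (t - p.1, f p.2) with hkdef
  have hkm : AEStronglyMeasurable k
      ((volume.restrict (Ioc (0:ℝ) t)).prod (volume.restrict (Ioc (0:ℝ) t))) := by
    apply hψc.comp_aestronglyMeasurable
    exact ((continuous_const.sub continuous_fst).aestronglyMeasurable).prodMk hfaem.comp_snd
  set Tri : Set (ℝ × ℝ) := {q : ℝ × ℝ | q.2 ≤ q.1} with hTridef
  have hTrim : MeasurableSet Tri := (isClosed_le continuous_snd continuous_fst).measurableSet
  set K : ℝ × ℝ → X := Tri.indicator k with hKdef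
  have hKm : AEStronglyMeasurable K
      ((volume.restrict (Ioc (0:ℝ) t)).prod (volume.restrict (Ioc (0:ℝ) t))) :=
    hkm.indicator hTrim
  have hKbound : ∀ p : ℝ × ℝ, ‖K p‖ ≤ M * ‖f p.2‖ := by
    intro p
    have hb : ‖k p‖ ≤ M * ‖f p.2‖ := by
      calc ‖k p‖ ≤ ‖Q (min (max (t - p.1) 0) (T+1))‖ * ‖f p.2‖ := (Q _).le_opNorm _
        _ ≤ M * ‖f p.2‖ := by
            gcongr
            exact hMb _ (hclampmem _)
    by_cases hp : p ∈ Tri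
    · rw [hKdef, Set.indicator_of_mem hp]; exact hb
    · rw [hKdef, Set.indicator_of_notMem hp]
      simp only [norm_zero]
      positivity
  have hsec : ∀ r : ℝ, (fun ρ => K (r, ρ))
      = (Iic r).indicator (fun ρ => (Q (min (max (t - r) 0) (T+1))) (f ρ)) := by
    intro r
    funext ρ
    by_cases h : ρ ≤ r
    · rw [hKdef, Set.indicator_of_mem (show (r, ρ) ∈ Tri from h),
        Set.indicator_of_mem (mem_Iic.2 h)]
    · rw [hKdef, Set.indicator_of_notMem (show (r, ρ) ∉ Tri from h),
        Set.indicator_of_notMem (fun hc => h (mem_Iic.1 hc))]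
  have hKint : Integrable K
      ((volume.restrict (Ioc (0:ℝ) t)).prod (volume.restrict (Ioc (0:ℝ) t))) := by
    rw [integrable_prod_iff hKm]
    constructor
    · filter_upwards with r
      rw [hsec r]
      exact (((Q _).integrable_comp hfRes).indicator measurableSet_Iic)
    · apply Integrable.mono'
        (g := fun _ => M * ∫ ρ in Ioc (0:ℝ) t, ‖f ρ‖) (integrable_const _)
        (hKm.norm.integral_prod_right')
      filter_upwards with r
      have h0 : 0 ≤ ∫ ρ in Ioc (0:ℝ) t, ‖K (r, ρ)‖ :=
        integral_nonneg fun ρ => norm_nonneg _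
      rw [Real.norm_of_nonneg h0]
      calc (∫ ρ in Ioc (0:ℝ) t, ‖K (r, ρ)‖) ≤ ∫ ρ in Ioc (0:ℝ) t, M * ‖f ρ‖ := by
            apply integral_mono_of_nonneg (Eventually.of_forall fun ρ => norm_nonneg _)
              (hfRes.norm.const_mul M) (Eventually.of_forall fun ρ => hKbound (r, ρ))
        _ = M * ∫ ρ in Ioc (0:ℝ) t, ‖f ρ‖ := by
            simpa using MeasureTheory.integral_smul (μ := volume.restrict (Ioc (0:ℝ) t)) M (fun ρ => ‖f ρ‖)
  have hKint' : Integrable (Function.uncurry fun r ρ => K (r, ρ))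
      ((volume.restrict (Ioc (0:ℝ) t)).prod (volume.restrict (Ioc (0:ℝ) t))) := by
    exact hKint
  have hswap := integral_integral_swap hKint'
  have hRae : ∀ᵐ ρ ∂(volume.restrict (Ioc (0:ℝ) t)),
      (∫ r in Ioc (0:ℝ) t, K (r, ρ)) = Sv (t - ρ) (f ρ) := by
    filter_upwards [ae_restrict_mem measurableSet_Ioc] with ρ hρ
    have h1 : (fun r => K (r, ρ)) = (Ici ρ).indicator (fun r => ψ (t - r, f ρ)) := by
      funext r
      by_cases h : ρ ≤ r
      · rw [hKdef, Set.indicator_of_mem (show (r, ρ) ∈ Tri from h),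
          Set.indicator_of_mem (mem_Ici.2 h)]
      · rw [hKdef, Set.indicator_of_notMem (show (r, ρ) ∉ Tri from h),
          Set.indicator_of_notMem (fun hc => h (mem_Ici.1 hc))]
    rw [h1, MeasureTheory.integral_indicator measurableSet_Ici,
      Measure.restrict_restrict measurableSet_Ici]
    have h2 : Ici ρ ∩ Ioc 0 t = Icc ρ t := by
      ext x
      simp only [mem_inter_iff, mem_Ici, mem_Ioc, mem_Icc]
      constructor
      · rintro ⟨ha, _, hb⟩; exact ⟨ha, hb⟩
      · rintro ⟨ha, hb⟩; exact ⟨ha, lt_of_lt_of_le hρ.1 ha, hb⟩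
    rw [h2, integral_Icc_eq_integral_Ioc, ← intervalIntegral.integral_of_le hρ.2]
    rw [show (∫ r in ρ..t, ψ (t - r, f ρ)) = ∫ r in ρ..t, (fun σ => ψ (σ, f ρ)) (t - r) from rfl]
    rw [intervalIntegral.integral_comp_sub_left (fun σ => ψ (σ, f ρ)) t, sub_self]
    refine intervalIntegral.integral_congr fun σ hσ => ?_
    rw [uIcc_of_le (by linarith [hρ.2] : (0:ℝ) ≤ t - ρ)] at hσ
    exact hψeq σ ⟨hσ.1, by linarith [hσ.2, hρ.1]⟩ (f ρ)
  have hSvInt : Integrable (fun ρ => Sv (t-ρ) (f ρ)) (volume.restrict (Ioc 0 t)) := by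
    have h3 : Integrable (fun ρ => ∫ r in Ioc (0:ℝ) t, K (r, ρ))
        (volume.restrict (Ioc (0:ℝ) t)) := hKint.integral_prod_right
    exact h3.congr hRae
  have hLae : ∀ᵐ r ∂(volume.restrict (Ioc (0:ℝ) t)),
      (∫ ρ in Ioc (0:ℝ) t, K (r, ρ)) = ψ (t - r, If r) := by
    filter_upwards [ae_restrict_mem measurableSet_Ioc] with r hr
    rw [hsec r, MeasureTheory.integral_indicator measurableSet_Iic,
      Measure.restrict_restrict measurableSet_Iic]
    have h2 : Iic r ∩ Ioc 0 t = Ioc 0 r := by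
      ext x
      simp only [mem_inter_iff, mem_Iic, mem_Ioc]
      constructor
      · rintro ⟨ha, hb, _⟩; exact ⟨hb, ha⟩
      · rintro ⟨ha, hb⟩; exact ⟨hb, ha, le_trans hb hr.2⟩
    rw [h2, ContinuousLinearMap.integral_comp_comm _ (hfRes.mono_set (Ioc_subset_Ioc_right hr.2)),
      hIocf r hr.1.le]
  have hrep2 : F t = Sv t x₀ + ∫ ρ in Ioc (0:ℝ) t, Sv (t-ρ) (f ρ) := by
    have hint1 : IntegrableOn (fun r => ψ (t - r, x₀)) (Ioc 0 t) := by
      have hc : Continuous (fun r : ℝ => ψ (t - r, x₀)) :=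
        hψc.comp ((continuous_const.sub continuous_id).prodMk continuous_const)
      exact (hc.continuousOn.integrableOn_compact isCompact_Icc).mono_set Ioc_subset_Icc_self
    have hint2 : IntegrableOn (fun r => ψ (t - r, If r)) (Ioc 0 t) := by
      have hc : ContinuousOn (fun r : ℝ => ψ (t - r, If r)) (Icc 0 t) := by
        apply hψc.comp_continuousOn
        exact ((continuous_const.sub continuous_id).continuousOn).prodMk (hIfc.mono hsubT)
      exact (hc.integrableOn_compact isCompact_Icc).mono_set Ioc_subset_Icc_self
    have hsplit : (∫ r in Ioc (0:ℝ) t, ψ (t - r, x₀ + If r))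
        = (∫ r in Ioc (0:ℝ) t, ψ (t - r, x₀)) + ∫ r in Ioc (0:ℝ) t, ψ (t - r, If r) := by
      rw [← integral_add hint1 hint2]
      apply MeasureTheory.integral_congr_ae
      filter_upwards with r
      simp only [hψdef, map_add]
    have hpiece1 : (∫ r in Ioc (0:ℝ) t, ψ (t - r, x₀)) = Sv t x₀ := by
      rw [← intervalIntegral.integral_of_le h0t.le]
      rw [show (∫ r in (0:ℝ)..t, ψ (t - r, x₀)) = ∫ r in (0:ℝ)..t, (fun σ => ψ (σ, x₀)) (t - r) from rfl]
      rw [intervalIntegral.integral_comp_sub_left (fun σ => ψ (σ, x₀)) t, sub_self, sub_zero]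
      refine intervalIntegral.integral_congr fun σ hσ => ?_
      rw [uIcc_of_le h0t.le] at hσ
      exact hψeq σ ⟨hσ.1, by linarith [hσ.2]⟩ x₀
    have hpiece2 : (∫ r in Ioc (0:ℝ) t, ψ (t - r, If r))
        = ∫ ρ in Ioc (0:ℝ) t, Sv (t-ρ) (f ρ) := by
      rw [← MeasureTheory.integral_congr_ae hLae, hswap, MeasureTheory.integral_congr_ae hRae]
    rw [hrep, intervalIntegral.integral_of_le h0t.le, hsplit, hpiece1, hpiece2]
  -- Step 5 : the generator limit
  have hψfaem : AEStronglyMeasurable (fun ρ => ψ (t - ρ, f ρ)) (volume.restrict (Ioc (0:ℝ) t)) := by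
    apply hψc.comp_aestronglyMeasurable
    exact ((continuous_const.sub continuous_id).aestronglyMeasurable).prodMk hfaem
  have hQfInt : Integrable (fun ρ => Q (t-ρ) (f ρ)) (volume.restrict (Ioc 0 t)) := by
    have hψfInt : Integrable (fun ρ => ψ (t - ρ, f ρ)) (volume.restrict (Ioc (0:ℝ) t)) := by
      apply Integrable.mono' (hfRes.norm.const_mul M) hψfaem
      filter_upwards with ρ
      calc ‖ψ (t - ρ, f ρ)‖ ≤ ‖Q (min (max (t - ρ) 0) (T+1))‖ * ‖f ρ‖ := (Q _).le_opNorm _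
        _ ≤ M * ‖f ρ‖ := by
            gcongr
            exact hMb _ (hclampmem _)
    apply hψfInt.congr
    filter_upwards [ae_restrict_mem measurableSet_Ioc] with ρ hρ
    exact hψeq (t - ρ) ⟨by linarith [hρ.2], by linarith [hρ.1]⟩ (f ρ)
  have hQyI : ∀ y : X, IntegrableOn (fun σ => Q σ y) (Icc 0 (T+1)) :=
    fun y => ((hQcont y).mono (fun x hx => hx.1)).integrableOn_compact isCompact_Icc
  have hQyII : ∀ (y : X) (a b : ℝ), a ∈ Icc (0:ℝ) (T+1) → b ∈ Icc (0:ℝ) (T+1) →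
      IntervalIntegrable (fun σ => Q σ y) volume a b := fun y a b ha hb =>
    ((hQyI y).mono_set (uIcc_subset_Icc ha hb)).intervalIntegrable
  have Sid : ∀ (y : X) (τ h : ℝ), 0 ≤ τ → τ ≤ T → 0 < h → h ≤ 1 →
      h⁻¹ • (Q h (Sv τ y) - Sv τ y)
      = h⁻¹ • (∫ σ in τ..(τ+h), Q σ y) - h⁻¹ • (∫ σ in (0:ℝ)..h, Q σ y) := by
    intro y τ h hτ0 hτT hh0 hh1
    have hτmem : τ ∈ Icc (0:ℝ) (T+1) := ⟨hτ0, by linarith⟩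
    have hhmem : h ∈ Icc (0:ℝ) (T+1) := ⟨hh0.le, by linarith⟩
    have hτhmem : τ + h ∈ Icc (0:ℝ) (T+1) := ⟨by linarith, by linarith⟩
    have h0mem : (0:ℝ) ∈ Icc (0:ℝ) (T+1) := ⟨le_rfl, by linarith⟩
    have hQS : Q h (Sv τ y) = ∫ σ in h..(τ+h), Q σ y := by
      have hcongr : (∫ σ in (0:ℝ)..τ, Q h (Q σ y))
          = ∫ σ in (0:ℝ)..τ, (fun σ' => Q σ' y) (h + σ) := by
        refine intervalIntegral.integral_congr fun σ hσ => ?_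
        rw [uIcc_of_le hτ0] at hσ
        show (Q h) ((Q σ) y) = Q (h + σ) y
        rw [hQsem h σ hh0.le hσ.1]
        rfl
      rw [hSvdef]
      rw [← ContinuousLinearMap.intervalIntegral_comp_comm _ (hQyII y 0 τ h0mem hτmem)]
      rw [hcongr, intervalIntegral.integral_comp_add_left (fun σ' => Q σ' y) h, add_zero,
        add_comm h τ]
    have e1 : (∫ σ in h..(τ+h), Q σ y)
        = (∫ σ in h..τ, Q σ y) + ∫ σ in τ..(τ+h), Q σ y :=
      (intervalIntegral.integral_add_adjacent_intervals (hQyII y h τ hhmem hτmem)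
        (hQyII y τ (τ+h) hτmem hτhmem)).symm
    have e2 : Sv τ y = (∫ σ in (0:ℝ)..h, Q σ y) + ∫ σ in h..τ, Q σ y := by
      rw [hSvdef]
      exact (intervalIntegral.integral_add_adjacent_intervals (hQyII y 0 h h0mem hhmem)
        (hQyII y h τ hhmem hτmem)).symm
    rw [hQS, e1, e2, ← smul_sub]
    congr 1
    abel
  have Sb : ∀ (y : X) (a h : ℝ), 0 ≤ a → a ≤ T → 0 < h → h ≤ 1 →
      ‖h⁻¹ • ∫ σ in a..(a+h), Q σ y‖ ≤ M * ‖y‖ := by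
    intro y a h ha0 haT hh0 hh1
    have hbnd : ‖∫ σ in a..(a+h), Q σ y‖ ≤ (M * ‖y‖) * |a + h - a| := by
      apply intervalIntegral.norm_integral_le_of_norm_le_const
      intro x hx
      rw [uIoc_of_le (by linarith : a ≤ a + h)] at hx
      calc ‖Q x y‖ ≤ ‖Q x‖ * ‖y‖ := (Q x).le_opNorm y
        _ ≤ M * ‖y‖ := by
            gcongr
            exact hMb x ⟨by linarith [hx.1], by linarith [hx.2]⟩
    rw [norm_smul, Real.norm_eq_abs, abs_inv, abs_of_pos hh0]
    have h2 : |a + h - a| = h := by rw [add_sub_cancel_left, abs_of_pos hh0]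
    rw [h2] at hbnd
    calc h⁻¹ * ‖∫ σ in a..(a+h), Q σ y‖ ≤ h⁻¹ * ((M * ‖y‖) * h) :=
          mul_le_mul_of_nonneg_left hbnd (inv_nonneg.2 hh0.le)
      _ = M * ‖y‖ := by field_simp
  have Slim : ∀ (y : X) (τ : ℝ), 0 ≤ τ → τ ≤ T →
      Tendsto (fun h => h⁻¹ • (Q h (Sv τ y) - Sv τ y)) (nhdsWithin 0 (Ioi 0))
        (nhds (Q τ y - y)) := by
    intro y τ hτ0 hτT
    have havg : ∀ a : ℝ, 0 ≤ a → a ≤ T →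
        Tendsto (fun h : ℝ => h⁻¹ • ∫ σ in a..(a+h), Q σ y) (nhdsWithin 0 (Ioi 0))
          (nhds (Q a y)) := by
      intro a ha0 haT
      have hmem : Icc (0:ℝ) (T+1) ∈ nhdsWithin a (Ioi a) := by
        apply mem_nhdsWithin.2
        refine ⟨Iio (T+1), isOpen_Iio, mem_Iio.2 (by linarith), fun x hx => ⟨le_trans ha0 hx.2.le, hx.1.le⟩⟩
      have hD1 : HasDerivWithinAt (fun b => ∫ σ in a..b, Q σ y) (Q a y) (Ici a) a := by
        refine intervalIntegral.integral_hasDerivWithinAt_right IntervalIntegrable.refl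
          ⟨Icc 0 (T+1), hmem, (hQyI y).aestronglyMeasurable⟩ ?_
        refine ((hQcont y) a (mem_Ici.2 ha0)).mono_of_mem_nhdsWithin
          (mem_of_superset self_mem_nhdsWithin fun x hx => le_trans ha0 (le_of_lt hx))
      have hslope := hasDerivWithinAt_iff_tendsto_slope.1 hD1
      rw [Set.Ici_sdiff_left] at hslope
      have hmap : Tendsto (fun h : ℝ => a + h) (nhdsWithin 0 (Ioi 0)) (nhdsWithin a (Ioi a)) := by
        apply tendsto_nhdsWithin_of_tendsto_nhds_of_eventually_within
        · have h3 : Tendsto (fun h : ℝ => a + h) (nhds 0) (nhds (a + 0)) :=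
            (continuous_const.add continuous_id).tendsto 0
          rw [add_zero] at h3
          exact h3.mono_left nhdsWithin_le_nhds
        · filter_upwards [self_mem_nhdsWithin] with h hh
          exact mem_Ioi.2 (by linarith [mem_Ioi.1 hh])
      have hcomp := hslope.comp hmap
      refine Tendsto.congr (fun h => ?_) hcomp
      show slope (fun b => ∫ σ in a..b, Q σ y) a (a + h) = _
      rw [slope_def_module, intervalIntegral.integral_same, sub_zero, add_sub_cancel_left]
    have h1 := havg τ hτ0 hτT
    have h2 := havg 0 le_rfl hT.le
    simp only [zero_add, hQ0, ContinuousLinearMap.id_apply] at h2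
    have hsub := h1.sub h2
    refine Tendsto.congr' ?_ hsub
    have hlt1 : ∀ᶠ h in nhdsWithin (0:ℝ) (Ioi 0), h < 1 :=
      eventually_nhdsWithin_of_eventually_nhds
        (Filter.Tendsto.eventually_lt_const (by norm_num) tendsto_id)
    filter_upwards [self_mem_nhdsWithin, hlt1] with h hh0 hh1
    exact (Sid y τ h hτ0 hτT (mem_Ioi.1 hh0) hh1.le).symm
  have final : u t - x₀ - If t = Q t x₀ - x₀ + ((∫ ρ in Ioc (0:ℝ) t, Q (t-ρ) (f ρ)) - If t) := by
    obtain ⟨hDt, hAt⟩ := key t ⟨ht0, htT⟩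
    have hgenFt : Tendsto (fun h => h⁻¹ • (Q h (F t) - F t)) (nhdsWithin 0 (Ioi 0))
        (nhds (A ⟨F t, hDt⟩)) := hgen ⟨F t, hDt⟩
    have hDCT : Tendsto
        (fun h => ∫ ρ in Ioc (0:ℝ) t, h⁻¹ • (Q h (Sv (t-ρ) (f ρ)) - Sv (t-ρ) (f ρ)))
        (nhdsWithin 0 (Ioi 0))
        (nhds (∫ ρ in Ioc (0:ℝ) t, (Q (t-ρ) (f ρ) - f ρ))) := by
      apply MeasureTheory.tendsto_integral_filter_of_dominated_convergence
        (bound := fun ρ => 2 * (M * ‖f ρ‖))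
      · filter_upwards with h
        exact (((Q h).continuous.comp_aestronglyMeasurable hSvInt.aestronglyMeasurable).sub
          hSvInt.aestronglyMeasurable).const_smul h⁻¹
      · have hlt1 : ∀ᶠ h in nhdsWithin (0:ℝ) (Ioi 0), h < 1 :=
          eventually_nhdsWithin_of_eventually_nhds
            (Filter.Tendsto.eventually_lt_const (by norm_num) tendsto_id)
        filter_upwards [self_mem_nhdsWithin, hlt1] with h hh0 hh1
        filter_upwards [ae_restrict_mem measurableSet_Ioc] with ρ hρ
        have hτ0 : (0:ℝ) ≤ t - ρ := by linarith [hρ.2]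
        have hτT : t - ρ ≤ T := by linarith [hρ.1, htT]
        rw [Sid (f ρ) (t-ρ) h hτ0 hτT (mem_Ioi.1 hh0) hh1.le]
        calc ‖h⁻¹ • (∫ σ in (t-ρ)..((t-ρ)+h), Q σ (f ρ))
              - h⁻¹ • ∫ σ in (0:ℝ)..h, Q σ (f ρ)‖
            ≤ ‖h⁻¹ • ∫ σ in (t-ρ)..((t-ρ)+h), Q σ (f ρ)‖
              + ‖h⁻¹ • ∫ σ in (0:ℝ)..h, Q σ (f ρ)‖ := norm_sub_le _ _
          _ ≤ M * ‖f ρ‖ + M * ‖f ρ‖ := by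
              have b1 := Sb (f ρ) (t-ρ) h hτ0 hτT (mem_Ioi.1 hh0) hh1.le
              have b2 := Sb (f ρ) 0 h le_rfl hT.le (mem_Ioi.1 hh0) hh1.le
              rw [zero_add] at b2
              exact add_le_add b1 b2
          _ = 2 * (M * ‖f ρ‖) := by ring
      · exact (hfRes.norm.const_mul M).const_mul 2
      · filter_upwards [ae_restrict_mem measurableSet_Ioc] with ρ hρ
        exact Slim (f ρ) (t-ρ) (by linarith [hρ.2]) (by linarith [hρ.1, htT])
    have hEq : ∀ᶠ h in nhdsWithin (0:ℝ) (Ioi 0), h⁻¹ • (Q h (F t) - F t)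
        = h⁻¹ • (Q h (Sv t x₀) - Sv t x₀)
          + ∫ ρ in Ioc (0:ℝ) t, h⁻¹ • (Q h (Sv (t-ρ) (f ρ)) - Sv (t-ρ) (f ρ)) := by
      filter_upwards with h
      have hQint : Q h (∫ ρ in Ioc (0:ℝ) t, Sv (t-ρ) (f ρ))
          = ∫ ρ in Ioc (0:ℝ) t, Q h (Sv (t-ρ) (f ρ)) :=
        (ContinuousLinearMap.integral_comp_comm _ hSvInt).symm
      rw [MeasureTheory.integral_smul,
        MeasureTheory.integral_sub ((Q h).integrable_comp hSvInt) hSvInt,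
        hrep2, map_add, hQint, ← smul_add]
      congr 1
      abel
    have hT1 : Tendsto (fun h => h⁻¹ • (Q h (Sv t x₀) - Sv t x₀)
        + ∫ ρ in Ioc (0:ℝ) t, h⁻¹ • (Q h (Sv (t-ρ) (f ρ)) - Sv (t-ρ) (f ρ)))
        (nhdsWithin (0:ℝ) (Ioi 0))
        (nhds ((Q t x₀ - x₀) + ∫ ρ in Ioc (0:ℝ) t, (Q (t-ρ) (f ρ) - f ρ))) :=
      (Slim x₀ t ht0 htT).add hDCT
    have huniq : A ⟨F t, hDt⟩
        = (Q t x₀ - x₀) + ∫ ρ in Ioc (0:ℝ) t, (Q (t-ρ) (f ρ) - f ρ) :=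
      tendsto_nhds_unique (Tendsto.congr' hEq hgenFt) hT1
    rw [← hAt, huniq, MeasureTheory.integral_sub hQfInt hfRes, hIocf t ht0]
  have hfin : u t = Q t x₀ + ∫ ρ in Ioc (0:ℝ) t, Q (t-ρ) (f ρ) := by
    have h := final
    rw [sub_sub, sub_eq_iff_eq_add] at h
    rw [h]; abel
  exact hfin
end
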